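/- arXiv:1605.03142 — 7 statements merged into one kernel-verified Lean document; each statement's English description precedes it below -/
import Mathlib

section
/- In the utility self-modification model, let u' be the utility function that is constantly 1, fix an arbitrary world action â, and let π' be the policy that on every history selects the action a' = (â, u'). Then π' is optimal for the hedonistic value functions: for every policy π and every history h, V^{he,π}(h) ≤ V^{he,π'}(h). -/
/-!
STATEMENT 0 (Everitt et al., "Self-Modification of Policy and Utility Function
in Rational Agents", Theorem "Hedonistic agents self-modify", part 1).

Utility self-modification model: world actions `Ahat` (finite), percepts `Ept`
(finite).  An instantaneous utility function maps finite world histories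
(sequences of world-action–percept pairs) to `[0,1]`.  Actions are pairs of a
world action and the utility function selected for the next step.  The belief
`ρ` is modification-independent (it depends only on the world part of the
history, which is enforced by its type) and assigns a full-support probability
distribution over percepts.

The hedonistic value of a policy `π` at history `h` is the `ρ^π_ig`-expected
discounted sum `Σ_{k≥t} γ^{k-t} u_{k+1}(world history up to k)`, where
`u_{k+1}` is the utility function selected by the action `a_k` and all future
actions are chosen by `π` itself.  This is formalised via the finite-horizon
expectations `EUhe` and the discounted sum `Qhe`/`Vhe`.

Claim: if `u'` is the constant-1 utility function, `aw` an arbitrary world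
action, and `π'` the policy that always selects `(aw, u')`, then `π'` is
optimal for the hedonistic value functions: for every policy `π` and every
history `h`, `V^{he,π}(h) ≤ V^{he,π'}(h)`.
-/

noncomputable section

namespace Stmt0

/-- Instantaneous utility functions: world histories to `[0,1]`.
(Modification-independence is enforced by the type.) -/
abbrev Util (Ahat Ept : Type*) : Type _ := List (Ahat × Ept) → Set.Icc (0 : ℝ) 1

/-- Actions: a world action together with the utility function selected for
the next step. -/
abbrev Act (Ahat Ept : Type*) : Type _ := Ahat × Util Ahat Ept

/-- Histories: finite sequences of action–percept pairs. -/
abbrev Hist (Ahat Ept : Type*) : Type _ := List (Act Ahat Ept × Ept)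

/-- Policies: maps from histories to actions. -/
abbrev Policy (Ahat Ept : Type*) : Type _ := Hist Ahat Ept → Act Ahat Ept

/-- The world part of a history (utility-function components deleted). -/
def hworld {Ahat Ept : Type*} (h : Hist Ahat Ept) : List (Ahat × Ept) :=
  h.map fun pe => (pe.1.1, pe.2)

/-- `EUhe ρ π h a n` is the expected hedonistic instantaneous utility received
`n` steps after taking action `a` following history `h`, with percepts sampled
from `ρ` and all future actions taken by `π` (the ignorant measure `ρ^π_ig`);
the utility used at each step is the one selected by the action of that step. -/
def EUhe {Ahat Ept : Type*} [Fintype Ept]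
    (ρ : List (Ahat × Ept) → Ahat → Ept → ℝ) (π : Policy Ahat Ept) :
    Hist Ahat Ept → Act Ahat Ept → ℕ → ℝ
  | h, a, 0 => ∑ e, ρ (hworld h) a.1 e * ((a.2 (hworld h ++ [(a.1, e)]) : ℝ))
  | h, a, n + 1 =>
      ∑ e, ρ (hworld h) a.1 e *
        EUhe ρ π (h ++ [(a, e)]) (π (h ++ [(a, e)])) n

/-- The hedonistic `Q`-value: expected discounted sum of future instantaneous
utilities, each evaluated by the utility function selected at that step. -/
def Qhe {Ahat Ept : Type*} [Fintype Ept] (γ : ℝ)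
    (ρ : List (Ahat × Ept) → Ahat → Ept → ℝ) (π : Policy Ahat Ept)
    (h : Hist Ahat Ept) (a : Act Ahat Ept) : ℝ :=
  ∑' n : ℕ, γ ^ n * EUhe ρ π h a n

/-- The hedonistic `V`-value of a policy. -/
def Vhe {Ahat Ept : Type*} [Fintype Ept] (γ : ℝ)
    (ρ : List (Ahat × Ept) → Ahat → Ept → ℝ) (π : Policy Ahat Ept)
    (h : Hist Ahat Ept) : ℝ :=
  Qhe γ ρ π h (π h)

/-- **Hedonistic agents self-modify.**  The policy `π'` that always performs
the self-modifying action `(aw, u')`, where `u'` is the constant-1 utility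
function, is optimal for the hedonistic value functions. -/
theorem hedonistic_selfmod_optimal
    {Ahat Ept : Type*} [Fintype Ahat] [Nonempty Ahat] [Fintype Ept] [Nonempty Ept]
    (ρ : List (Ahat × Ept) → Ahat → Ept → ℝ)
    (hρpos : ∀ wh (aw : Ahat) (e : Ept), 0 < ρ wh aw e)
    (hρsum : ∀ wh (aw : Ahat), ∑ e, ρ wh aw e = 1)
    (γ : ℝ) (hγ0 : 0 < γ) (hγ1 : γ < 1)
    (u' : Util Ahat Ept) (hu' : ∀ wh, (u' wh : ℝ) = 1)
    (aw : Ahat)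
    (π' : Policy Ahat Ept) (hπ' : ∀ h, π' h = (aw, u'))
    (π : Policy Ahat Ept) (h : Hist Ahat Ept) :
    Vhe γ ρ π h ≤ Vhe γ ρ π' h := by
  -- Bounds on EUhe for an arbitrary policy
  have hEU : ∀ (σ : Policy Ahat Ept) (n : ℕ) (h : Hist Ahat Ept) (a : Act Ahat Ept),
      0 ≤ EUhe ρ σ h a n ∧ EUhe ρ σ h a n ≤ 1 := by
    intro σ n
    induction n with
    | zero =>
      intro h a
      constructor
      · apply Finset.sum_nonneg
        intro e _
        exact mul_nonneg (le_of_lt (hρpos _ _ _)) (a.2 _).2.1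
      · calc ∑ e, ρ (hworld h) a.1 e * ((a.2 (hworld h ++ [(a.1, e)]) : ℝ))
            ≤ ∑ e, ρ (hworld h) a.1 e * 1 := by
              apply Finset.sum_le_sum
              intro e _
              exact mul_le_mul_of_nonneg_left (a.2 _).2.2 (le_of_lt (hρpos _ _ _))
        _ = 1 := by simp [hρsum]
    | succ n ih =>
      intro h a
      constructor
      · apply Finset.sum_nonneg
        intro e _
        exact mul_nonneg (le_of_lt (hρpos _ _ _)) (ih _ _).1
      · calc ∑ e, ρ (hworld h) a.1 e * EUhe ρ σ (h ++ [(a, e)]) (σ (h ++ [(a, e)])) n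
            ≤ ∑ e, ρ (hworld h) a.1 e * 1 := by
              apply Finset.sum_le_sum
              intro e _
              exact mul_le_mul_of_nonneg_left (ih _ _).2 (le_of_lt (hρpos _ _ _))
        _ = 1 := by simp [hρsum]
  -- EUhe for π' is exactly 1
  have hEU' : ∀ (n : ℕ) (h : Hist Ahat Ept), EUhe ρ π' h (aw, u') n = 1 := by
    intro n
    induction n with
    | zero =>
      intro h
      simp only [EUhe, hu', mul_one]
      exact hρsum _ _
    | succ n ih =>
      intro h
      simp only [EUhe, hπ', ih, mul_one]
      exact hρsum _ _
  have hγnn : (0:ℝ) ≤ γ := le_of_lt hγ0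
  have hsumgeo : Summable (fun n : ℕ => γ ^ n) := summable_geometric_of_lt_one hγnn hγ1
  have hsum : Summable (fun n : ℕ => γ ^ n * EUhe ρ π h (π h) n) := by
    apply Summable.of_nonneg_of_le
    · intro n
      exact mul_nonneg (pow_nonneg hγnn n) (hEU π n h (π h)).1
    · intro n
      calc γ ^ n * EUhe ρ π h (π h) n ≤ γ ^ n * 1 :=
            mul_le_mul_of_nonneg_left (hEU π n h (π h)).2 (pow_nonneg hγnn n)
        _ = γ ^ n := mul_one _
    · exact hsumgeo
  unfold Vhe Qhe
  apply Summable.tsum_le_tsum _ hsum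
  · rw [hπ']
    simp only [hEU', mul_one]
    exact hsumgeo
  · intro n
    rw [hπ', hEU', mul_one]
    calc γ ^ n * EUhe ρ π h (π h) n ≤ γ ^ n * 1 :=
          mul_le_mul_of_nonneg_left (hEU π n h (π h)).2 (pow_nonneg hγnn n)
      _ = γ ^ n := mul_one _

end Stmt0
end
end

section
/- In the utility self-modification model, let u' be the utility function that is constantly 1, fix an arbitrary world action â, and let π' be the policy that on every history selects the action a' = (â, u'). Then for every history ae_{<t}, the hedonistic value of π' equals the maximum possible value: V^{he,π'}(ae_{<t}) = 1/(1-γ). -/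
/-!
STATEMENT 1 (Everitt et al., "Self-Modification of Policy and Utility Function
in Rational Agents", Theorem "Hedonistic agents self-modify", part 2).

Utility self-modification model: world actions `Ahat` (finite), percepts `Ept`
(finite).  An instantaneous utility function maps finite world histories
(sequences of world-action–percept pairs) to `[0,1]`.  Actions are pairs of a
world action and the utility function selected for the next step.  The belief
`ρ` is modification-independent (it depends only on the world part of the
history, which is enforced by its type) and assigns a full-support probability
distribution over percepts.

The hedonistic value of a policy `π` at history `h` is the `ρ^π_ig`-expected
discounted sum `Σ_{k≥t} γ^{k-t} u_{k+1}(world history up to k)`, where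
`u_{k+1}` is the utility function selected by the action `a_k` and all future
actions are chosen by `π` itself.  This is formalised via the finite-horizon
expectations `EUhe` and the discounted sum `Qhe`/`Vhe`.

Claim: if `u'` is the constant-1 utility function, `aw` an arbitrary world
action, and `π'` the policy that always selects `(aw, u')`, then for every
history `h`, the hedonistic value of `π'` equals the maximum possible value:
`V^{he,π'}(h) = 1/(1-γ)`.
-/

noncomputable section

namespace Stmt1

/-- Instantaneous utility functions: world histories to `[0,1]`.
(Modification-independence is enforced by the type.) -/
abbrev Util (Ahat Ept : Type*) : Type _ := List (Ahat × Ept) → Set.Icc (0 : ℝ) 1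

/-- Actions: a world action together with the utility function selected for
the next step. -/
abbrev Act (Ahat Ept : Type*) : Type _ := Ahat × Util Ahat Ept

/-- Histories: finite sequences of action–percept pairs. -/
abbrev Hist (Ahat Ept : Type*) : Type _ := List (Act Ahat Ept × Ept)

/-- Policies: maps from histories to actions. -/
abbrev Policy (Ahat Ept : Type*) : Type _ := Hist Ahat Ept → Act Ahat Ept

/-- The world part of a history (utility-function components deleted). -/
def hworld {Ahat Ept : Type*} (h : Hist Ahat Ept) : List (Ahat × Ept) :=
  h.map fun pe => (pe.1.1, pe.2)

/-- `EUhe ρ π h a n` is the expected hedonistic instantaneous utility received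
`n` steps after taking action `a` following history `h`, with percepts sampled
from `ρ` and all future actions taken by `π` (the ignorant measure `ρ^π_ig`);
the utility used at each step is the one selected by the action of that step. -/
def EUhe {Ahat Ept : Type*} [Fintype Ept]
    (ρ : List (Ahat × Ept) → Ahat → Ept → ℝ) (π : Policy Ahat Ept) :
    Hist Ahat Ept → Act Ahat Ept → ℕ → ℝ
  | h, a, 0 => ∑ e, ρ (hworld h) a.1 e * ((a.2 (hworld h ++ [(a.1, e)]) : ℝ))
  | h, a, n + 1 =>
      ∑ e, ρ (hworld h) a.1 e *
        EUhe ρ π (h ++ [(a, e)]) (π (h ++ [(a, e)])) n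

/-- The hedonistic `Q`-value: expected discounted sum of future instantaneous
utilities, each evaluated by the utility function selected at that step. -/
def Qhe {Ahat Ept : Type*} [Fintype Ept] (γ : ℝ)
    (ρ : List (Ahat × Ept) → Ahat → Ept → ℝ) (π : Policy Ahat Ept)
    (h : Hist Ahat Ept) (a : Act Ahat Ept) : ℝ :=
  ∑' n : ℕ, γ ^ n * EUhe ρ π h a n

/-- The hedonistic `V`-value of a policy. -/
def Vhe {Ahat Ept : Type*} [Fintype Ept] (γ : ℝ)
    (ρ : List (Ahat × Ept) → Ahat → Ept → ℝ) (π : Policy Ahat Ept)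
    (h : Hist Ahat Ept) : ℝ :=
  Qhe γ ρ π h (π h)

/-- **Hedonistic agents self-modify (value computation).**  The policy `π'`
that always performs the self-modifying action `(aw, u')`, where `u'` is the
constant-1 utility function, attains the maximum possible hedonistic value:
`V^{he,π'}(h) = 1/(1-γ)` on every history. -/
theorem hedonistic_selfmod_value
    {Ahat Ept : Type*} [Fintype Ahat] [Nonempty Ahat] [Fintype Ept] [Nonempty Ept]
    (ρ : List (Ahat × Ept) → Ahat → Ept → ℝ)
    (hρpos : ∀ wh (aw : Ahat) (e : Ept), 0 < ρ wh aw e)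
    (hρsum : ∀ wh (aw : Ahat), ∑ e, ρ wh aw e = 1)
    (γ : ℝ) (hγ0 : 0 < γ) (hγ1 : γ < 1)
    (u' : Util Ahat Ept) (hu' : ∀ wh, (u' wh : ℝ) = 1)
    (aw : Ahat)
    (π' : Policy Ahat Ept) (hπ' : ∀ h, π' h = (aw, u'))
    (h : Hist Ahat Ept) :
    Vhe γ ρ π' h = 1 / (1 - γ) := by
  have key : ∀ n (h : Hist Ahat Ept), EUhe ρ π' h (aw, u') n = 1 := by
    intro n
    induction n with
    | zero =>
      intro h
      simp only [EUhe, hu', mul_one]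
      exact hρsum _ _
    | succ n ih =>
      intro h
      simp only [EUhe, hπ', ih, mul_one]
      exact hρsum _ _
  have : Vhe γ ρ π' h = ∑' n : ℕ, γ ^ n := by
    unfold Vhe Qhe
    rw [hπ']
    congr 1; funext n; rw [key, mul_one]
  rw [this, tsum_geometric_of_lt_one hγ0.le hγ1, one_div]

end Stmt1
end
end

section
/- In the policy self-modification model, suppose the belief ρ and the current utility function u_t are modification-independent, and every named policy ι(p), p ∈ P, is modification-independent. Let π be a modification-independent policy with π(ae_{<t}) = (â_t, π_{t+1}), and let π̃ be identical to π except that on the history ae_{<t} it makes a different self-modification, π̃(ae_{<t}) = (â_t, π'_{t+1}) with π'_{t+1} ≠ π_{t+1}. Then the ignorant values agree: V^{ig,π̃}_t(ae_{<t}) = V^{ig,π}_t(ae_{<t}). -/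
/-!
STATEMENT 2 (Everitt et al., Theorem "Ignorant agents may self-modify").

Policy self-modification model: world actions `Ahat` (finite), percepts `Ept`
(finite), policy names `P` with naming map `ι : P → Policy`.  An action
`(aw, p)` consists of a world action `aw` and the name `p` of the policy used
at the next step.  The belief `ρ` and the utility function `u` are
modification-independent (enforced by their types: they take the world part of
the history).

The ignorant value functions of a policy `π` are the expected discounted sum
of `u`-utilities where percepts are sampled from `ρ` and *all* future actions
are sampled from `π` itself (the ignorant measure `ρ^π_ig`), formalised via
the `n`-step expectations `EUig` and `Qig`/`Vig`.

Claim: if every named policy `ι p` is modification-independent, `π` is a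
modification-independent policy with `π(ae_{<t}) = (aw_t, p_{t+1})`, and `π̃`
is identical to `π` except that on the history `ae_{<t}` it makes a different
self-modification `π̃(ae_{<t}) = (aw_t, p'_{t+1})` with
`ι p'_{t+1} ≠ ι p_{t+1}`, then the ignorant values agree:
`V^{ig,π̃}(ae_{<t}) = V^{ig,π}(ae_{<t})`.
-/

noncomputable section

namespace Stmt2

/-- Actions: a world action together with the name of the policy selected for
the next step. -/
abbrev Act (Ahat P : Type*) : Type _ := Ahat × P

/-- Histories: finite sequences of action–percept pairs. -/
abbrev Hist (Ahat P Ept : Type*) : Type _ := List (Act Ahat P × Ept)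

/-- Policies: maps from histories to actions. -/
abbrev Policy (Ahat P Ept : Type*) : Type _ := Hist Ahat P Ept → Act Ahat P

/-- The world part of a history (policy-name components deleted). -/
def hworld {Ahat P Ept : Type*} (h : Hist Ahat P Ept) : List (Ahat × Ept) :=
  h.map fun pe => (pe.1.1, pe.2)

/-- A function on histories is modification-independent if its value depends
only on the world part of its argument. -/
def ModIndep {Ahat P Ept α : Type*} (f : Hist Ahat P Ept → α) : Prop :=
  ∀ h h' : Hist Ahat P Ept, hworld h = hworld h' → f h = f h'


/-- `EUig ρ u π h a n`: expected `u`-utility received `n` steps after taking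
action `a` following history `h`, with percepts sampled from `ρ` and all
future actions taken by `π` itself (the ignorant measure `ρ^π_ig`). -/
def EUig {Ahat P Ept : Type*} [Fintype Ept]
    (ρ : List (Ahat × Ept) → Ahat → Ept → ℝ) (u : List (Ahat × Ept) → ℝ)
    (π : Policy Ahat P Ept) :
    Hist Ahat P Ept → Act Ahat P → ℕ → ℝ
  | h, a, 0 => ∑ e, ρ (hworld h) a.1 e * u (hworld h ++ [(a.1, e)])
  | h, a, n + 1 =>
      ∑ e, ρ (hworld h) a.1 e *
        EUig ρ u π (h ++ [(a, e)]) (π (h ++ [(a, e)])) n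

/-- The ignorant `Q`-value of a policy `π`. -/
def Qig {Ahat P Ept : Type*} [Fintype Ept] (γ : ℝ)
    (ρ : List (Ahat × Ept) → Ahat → Ept → ℝ) (u : List (Ahat × Ept) → ℝ)
    (π : Policy Ahat P Ept) (h : Hist Ahat P Ept) (a : Act Ahat P) : ℝ :=
  ∑' n : ℕ, γ ^ n * EUig ρ u π h a n

/-- The ignorant `V`-value of a policy `π`. -/
def Vig {Ahat P Ept : Type*} [Fintype Ept] (γ : ℝ)
    (ρ : List (Ahat × Ept) → Ahat → Ept → ℝ) (u : List (Ahat × Ept) → ℝ)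
    (π : Policy Ahat P Ept) (h : Hist Ahat P Ept) : ℝ :=
  Qig γ ρ u π h (π h)

lemma EUig_world {Ahat P Ept : Type*} [Fintype Ept]
    (ρ : List (Ahat × Ept) → Ahat → Ept → ℝ) (u : List (Ahat × Ept) → ℝ)
    (π : Policy Ahat P Ept) (hπ : ModIndep π) :
    ∀ n (h h' : Hist Ahat P Ept) (a a' : Act Ahat P),
      hworld h = hworld h' → a.1 = a'.1 →
      EUig ρ u π h a n = EUig ρ u π h' a' n := by
  intro n
  induction n with
  | zero => intro h h' a a' hw ha; simp [EUig, hw, ha]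
  | succ n ih =>
      intro h h' a a' hw ha
      simp only [EUig, hw, ha]
      refine Finset.sum_congr rfl fun e _ => ?_
      have hw' : hworld (h ++ [(a, e)]) = hworld (h' ++ [(a', e)]) := by
        simp only [hworld, List.map_append, List.map_cons, List.map_nil]
        simp only [hworld] at hw
        rw [hw, ha]
      have hπeq := hπ _ _ hw'
      rw [ih _ _ _ _ hw' (by rw [hπeq])]

lemma EUig_same {Ahat P Ept : Type*} [Fintype Ept]
    (ρ : List (Ahat × Ept) → Ahat → Ept → ℝ) (u : List (Ahat × Ept) → ℝ)
    (π πt : Policy Ahat P Ept) (h0 : Hist Ahat P Ept)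
    (hsame : ∀ h : Hist Ahat P Ept, h ≠ h0 → πt h = π h) :
    ∀ n (h : Hist Ahat P Ept) (a : Act Ahat P),
      h0.length ≤ h.length →
      EUig ρ u πt h a n = EUig ρ u π h a n := by
  intro n
  induction n with
  | zero => intro h a _; simp [EUig]
  | succ n ih =>
      intro h a hl
      simp only [EUig]
      refine Finset.sum_congr rfl fun e _ => ?_
      have hne : h ++ [(a, e)] ≠ h0 := by
        intro hc
        have := congrArg List.length hc
        simp at this
        omega
      rw [hsame _ hne, ih _ _ (by simp; omega)]

/-- **Ignorant agents may self-modify.**  Changing the self-modification made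
by a modification-independent policy at a single history does not change its
ignorant value there. -/
theorem ignorant_selfmod_indifferent
    {Ahat P Ept : Type*} [Fintype Ahat] [Nonempty Ahat] [Fintype Ept] [Nonempty Ept]
    (ι : P → Policy Ahat P Ept)
    (hι : ∀ p : P, ModIndep (ι p))
    (ρ : List (Ahat × Ept) → Ahat → Ept → ℝ)
    (hρpos : ∀ wh (aw : Ahat) (e : Ept), 0 < ρ wh aw e)
    (hρsum : ∀ wh (aw : Ahat), ∑ e, ρ wh aw e = 1)
    (u : List (Ahat × Ept) → ℝ)
    (hu : ∀ wh, u wh ∈ Set.Icc (0 : ℝ) 1)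
    (γ : ℝ) (hγ0 : 0 < γ) (hγ1 : γ < 1)
    (π πt : Policy Ahat P Ept) (hπ : ModIndep π)
    (h0 : Hist Ahat P Ept) (aw : Ahat) (p p' : P)
    (hπh0 : π h0 = (aw, p))
    (hmod : πt h0 = (aw, p'))
    (hdiff : ι p' ≠ ι p)
    (hsame : ∀ h : Hist Ahat P Ept, h ≠ h0 → πt h = π h) :
    Vig γ ρ u πt h0 = Vig γ ρ u π h0 := by
  unfold Vig Qig
  refine tsum_congr fun n => ?_
  rw [hπh0, hmod,
    EUig_same ρ u π πt h0 hsame n h0 (aw, p') le_rfl,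
    EUig_world ρ u π hπ n h0 h0 (aw, p') (aw, p) rfl rfl]

end Stmt2
end
end

section
/- In the policy self-modification model, suppose the belief ρ and the initial utility function u_1 are modification-independent, and the initial policy π_1 = ι(p_1) is optimal for the realistic value function V^re_1. Then for every t ≥ 1, every percept sequence e_{<t}, and the action sequence a_{<t} generated on-policy by a_i = π_i(ae_{<i}) (where π_{i+1} is the policy selected by action a_i), the policy at time t acts optimally with respect to the initial utility function: Q^re_1(ae_{<t} π_t(ae_{<t})) = Q^re_1(ae_{<t} π_1(ae_{<t})). -/
/-!
STATEMENT 3 (Everitt et al., Theorem "Realistic policy-modifying agents make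
safe modifications").

Policy self-modification model: world actions `Ahat` (finite), percepts `Ept`
(finite), policy names `P` with naming map `ι : P → Policy`.  An action
`(aw, p)` consists of a world action and the name of the policy used at the
next step.  The belief `ρ` and the initial utility function `u` are
modification-independent (enforced by their types).

The realistic value functions `Qre`/`Vre` (at time 1, for the initial utility
function `u`) give the expected discounted `u`-utility where percepts are
sampled from `ρ` and future actions are chosen by the policies selected by the
preceding actions (the realistic measure).

`build ι h π es` rolls out the on-policy history: starting from history `h`
and current policy `π`, each incoming percept `e` extends the history with the
action chosen by the current policy, which is then replaced by the policy it
selects.  Thus `build ι [] π1 es` is the history `ae_{<t}` generated by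
`a_i = π_i(ae_{<i})` for the percept sequence `es = e_{<t}`, together with the
time-`t` policy `π_t`.

Claim: if the initial policy `π1 = ι p1` is optimal for `V^re_1`, then at
every on-policy history the current policy acts `Q^re_1`-optimally:
`Q^re_1(ae_{<t} π_t(ae_{<t})) = Q^re_1(ae_{<t} π_1(ae_{<t}))`.
-/

noncomputable section

namespace Stmt3

/-- Actions: a world action together with the name of the policy selected for
the next step. -/
abbrev Act (Ahat P : Type*) : Type _ := Ahat × P

/-- Histories: finite sequences of action–percept pairs. -/
abbrev Hist (Ahat P Ept : Type*) : Type _ := List (Act Ahat P × Ept)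

/-- Policies: maps from histories to actions. -/
abbrev Policy (Ahat P Ept : Type*) : Type _ := Hist Ahat P Ept → Act Ahat P

/-- The world part of a history (policy-name components deleted). -/
def hworld {Ahat P Ept : Type*} (h : Hist Ahat P Ept) : List (Ahat × Ept) :=
  h.map fun pe => (pe.1.1, pe.2)

/-- A function on histories is modification-independent if its value depends
only on the world part of its argument. -/
def ModIndep {Ahat P Ept α : Type*} (f : Hist Ahat P Ept → α) : Prop :=
  ∀ h h' : Hist Ahat P Ept, hworld h = hworld h' → f h = f h'


/-- `EUre ι ρ u h a n`: expected `u`-utility received `n` steps after taking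
action `a` following history `h`, with percepts sampled from `ρ` and every
future action taken by the policy selected by the preceding action (the
realistic measure `ρ_re`). -/
def EUre {Ahat P Ept : Type*} [Fintype Ept] (ι : P → Policy Ahat P Ept)
    (ρ : List (Ahat × Ept) → Ahat → Ept → ℝ) (u : List (Ahat × Ept) → ℝ) :
    Hist Ahat P Ept → Act Ahat P → ℕ → ℝ
  | h, a, 0 => ∑ e, ρ (hworld h) a.1 e * u (hworld h ++ [(a.1, e)])
  | h, a, n + 1 =>
      ∑ e, ρ (hworld h) a.1 e *
        EUre ι ρ u (h ++ [(a, e)]) (ι a.2 (h ++ [(a, e)])) n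

/-- The realistic `Q`-value: expected discounted `u`-utility when all future
actions are chosen by the policies selected through self-modification. -/
def Qre {Ahat P Ept : Type*} [Fintype Ept] (ι : P → Policy Ahat P Ept)
    (ρ : List (Ahat × Ept) → Ahat → Ept → ℝ) (u : List (Ahat × Ept) → ℝ)
    (γ : ℝ) (h : Hist Ahat P Ept) (a : Act Ahat P) : ℝ :=
  ∑' n : ℕ, γ ^ n * EUre ι ρ u h a n

/-- The realistic `V`-value of a policy `π` (a policy argument beyond the next
action is superfluous, since the action determines the next policy). -/
def Vre {Ahat P Ept : Type*} [Fintype Ept] (ι : P → Policy Ahat P Ept)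
    (ρ : List (Ahat × Ept) → Ahat → Ept → ℝ) (u : List (Ahat × Ept) → ℝ)
    (γ : ℝ) (π : Policy Ahat P Ept) (h : Hist Ahat P Ept) : ℝ :=
  Qre ι ρ u γ h (π h)

/-- On-policy rollout: `build ι h π es` extends the history `h` (with current
policy `π`) by the actions chosen on-policy for the percept sequence `es`,
returning the resulting history together with the policy in force after it. -/
def build {Ahat P Ept : Type*} (ι : P → Policy Ahat P Ept) :
    Hist Ahat P Ept → Policy Ahat P Ept → List Ept →
      Hist Ahat P Ept × Policy Ahat P Ept
  | h, π, [] => (h, π)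
  | h, π, e :: es => build ι (h ++ [(π h, e)]) (ι (π h).2) es

section Proof

variable {Ahat P Ept : Type*} [Fintype Ept]
variable (ι : P → Policy Ahat P Ept)
variable {ρ : List (Ahat × Ept) → Ahat → Ept → ℝ}
variable {u : List (Ahat × Ept) → ℝ} {γ : ℝ}

omit [Fintype Ept] in
lemma hworld_append (h : Hist Ahat P Ept) (a : Act Ahat P) (e : Ept) :
    hworld (h ++ [(a, e)]) = hworld h ++ [(a.1, e)] := by
  simp [hworld]

lemma EUre_mem_Icc
    (hρpos : ∀ wh (aw : Ahat) (e : Ept), 0 < ρ wh aw e)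
    (hρsum : ∀ wh (aw : Ahat), ∑ e, ρ wh aw e = 1)
    (hu : ∀ wh, u wh ∈ Set.Icc (0 : ℝ) 1) :
    ∀ (n : ℕ) (h : Hist Ahat P Ept) (a : Act Ahat P),
      EUre ι ρ u h a n ∈ Set.Icc (0 : ℝ) 1 := by
  intro n
  induction n with
  | zero =>
    intro h a
    constructor
    · exact Finset.sum_nonneg fun e _ => mul_nonneg (hρpos _ _ _).le (hu _).1
    · calc ∑ e, ρ (hworld h) a.1 e * u (hworld h ++ [(a.1, e)])
          ≤ ∑ e, ρ (hworld h) a.1 e * 1 :=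
            Finset.sum_le_sum fun e _ =>
              mul_le_mul_of_nonneg_left (hu _).2 (hρpos _ _ _).le
        _ = 1 := by simpa using hρsum (hworld h) a.1
  | succ n ih =>
    intro h a
    constructor
    · exact Finset.sum_nonneg fun e _ => mul_nonneg (hρpos _ _ _).le (ih _ _).1
    · calc ∑ e, ρ (hworld h) a.1 e *
            EUre ι ρ u (h ++ [(a, e)]) (ι a.2 (h ++ [(a, e)])) n
          ≤ ∑ e, ρ (hworld h) a.1 e * 1 :=
            Finset.sum_le_sum fun e _ =>
              mul_le_mul_of_nonneg_left (ih _ _).2 (hρpos _ _ _).le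
        _ = 1 := by simpa using hρsum (hworld h) a.1

lemma EUre_summable
    (hρpos : ∀ wh (aw : Ahat) (e : Ept), 0 < ρ wh aw e)
    (hρsum : ∀ wh (aw : Ahat), ∑ e, ρ wh aw e = 1)
    (hu : ∀ wh, u wh ∈ Set.Icc (0 : ℝ) 1)
    (hγ0 : 0 < γ) (hγ1 : γ < 1) (h : Hist Ahat P Ept) (a : Act Ahat P) :
    Summable (fun n : ℕ => γ ^ n * EUre ι ρ u h a n) := by
  refine Summable.of_nonneg_of_le
    (fun n => mul_nonneg (pow_nonneg hγ0.le n)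
      (EUre_mem_Icc ι hρpos hρsum hu n h a).1)
    (fun n => ?_) (summable_geometric_of_lt_one hγ0.le hγ1)
  calc γ ^ n * EUre ι ρ u h a n ≤ γ ^ n * 1 :=
        mul_le_mul_of_nonneg_left (EUre_mem_Icc ι hρpos hρsum hu n h a).2
          (pow_nonneg hγ0.le n)
    _ = γ ^ n := mul_one _

lemma Qre_nonneg
    (hρpos : ∀ wh (aw : Ahat) (e : Ept), 0 < ρ wh aw e)
    (hρsum : ∀ wh (aw : Ahat), ∑ e, ρ wh aw e = 1)
    (hu : ∀ wh, u wh ∈ Set.Icc (0 : ℝ) 1)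
    (hγ0 : 0 < γ) (h : Hist Ahat P Ept) (a : Act Ahat P) :
    0 ≤ Qre ι ρ u γ h a :=
  tsum_nonneg fun n => mul_nonneg (pow_nonneg hγ0.le n)
    (EUre_mem_Icc ι hρpos hρsum hu n h a).1

lemma Qre_le_bound
    (hρpos : ∀ wh (aw : Ahat) (e : Ept), 0 < ρ wh aw e)
    (hρsum : ∀ wh (aw : Ahat), ∑ e, ρ wh aw e = 1)
    (hu : ∀ wh, u wh ∈ Set.Icc (0 : ℝ) 1)
    (hγ0 : 0 < γ) (hγ1 : γ < 1) (h : Hist Ahat P Ept) (a : Act Ahat P) :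
    Qre ι ρ u γ h a ≤ (1 - γ)⁻¹ := by
  have h1 : Qre ι ρ u γ h a ≤ ∑' n : ℕ, γ ^ n := by
    refine Summable.tsum_le_tsum (fun n => ?_)
      (EUre_summable ι hρpos hρsum hu hγ0 hγ1 h a)
      (summable_geometric_of_lt_one hγ0.le hγ1)
    calc γ ^ n * EUre ι ρ u h a n ≤ γ ^ n * 1 :=
          mul_le_mul_of_nonneg_left (EUre_mem_Icc ι hρpos hρsum hu n h a).2
            (pow_nonneg hγ0.le n)
      _ = γ ^ n := mul_one _
  rwa [tsum_geometric_of_lt_one hγ0.le hγ1] at h1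

lemma Qre_bellman
    (hρpos : ∀ wh (aw : Ahat) (e : Ept), 0 < ρ wh aw e)
    (hρsum : ∀ wh (aw : Ahat), ∑ e, ρ wh aw e = 1)
    (hu : ∀ wh, u wh ∈ Set.Icc (0 : ℝ) 1)
    (hγ0 : 0 < γ) (hγ1 : γ < 1) (h : Hist Ahat P Ept) (a : Act Ahat P) :
    Qre ι ρ u γ h a = EUre ι ρ u h a 0 +
      γ * ∑ e, ρ (hworld h) a.1 e *
        Qre ι ρ u γ (h ++ [(a, e)]) (ι a.2 (h ++ [(a, e)])) := by
  have hs := EUre_summable ι hρpos hρsum hu hγ0 hγ1 h a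
  rw [Qre, Summable.tsum_eq_zero_add hs]
  simp only [pow_zero, one_mul]
  congr 1
  have key : (fun n : ℕ => γ ^ (n + 1) * EUre ι ρ u h a (n + 1)) =
      fun n : ℕ => ∑ e, (γ * ρ (hworld h) a.1 e) *
        (γ ^ n * EUre ι ρ u (h ++ [(a, e)]) (ι a.2 (h ++ [(a, e)])) n) := by
    funext n
    show γ ^ (n + 1) * (∑ e, ρ (hworld h) a.1 e *
        EUre ι ρ u (h ++ [(a, e)]) (ι a.2 (h ++ [(a, e)])) n) = _
    rw [Finset.mul_sum]
    exact Finset.sum_congr rfl fun e _ => by ring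
  rw [key, Summable.tsum_finsetSum (fun e _ =>
    Summable.mul_left _ (EUre_summable ι hρpos hρsum hu hγ0 hγ1 _ _))]
  rw [Finset.mul_sum]
  refine Finset.sum_congr rfl fun e _ => ?_
  rw [tsum_mul_left, Qre]
  ring

lemma Qre_le_opt {π1 : Policy Ahat P Ept}
    (hρpos : ∀ wh (aw : Ahat) (e : Ept), 0 < ρ wh aw e)
    (hρsum : ∀ wh (aw : Ahat), ∑ e, ρ wh aw e = 1)
    (hu : ∀ wh, u wh ∈ Set.Icc (0 : ℝ) 1)
    (hγ0 : 0 < γ) (hγ1 : γ < 1)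
    (hopt : ∀ h : Hist Ahat P Ept,
      Vre ι ρ u γ π1 h = ⨆ π : Policy Ahat P Ept, Vre ι ρ u γ π h)
    (h : Hist Ahat P Ept) (a : Act Ahat P) :
    Qre ι ρ u γ h a ≤ Qre ι ρ u γ h (π1 h) := by
  have h1 : Qre ι ρ u γ h a = Vre ι ρ u γ (fun _ => a) h := rfl
  have h2 : Qre ι ρ u γ h (π1 h) = Vre ι ρ u γ π1 h := rfl
  rw [h1, h2, hopt h]
  refine le_ciSup (f := fun π : Policy Ahat P Ept => Vre ι ρ u γ π h) ?_ (fun _ => a)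
  refine ⟨(1 - γ)⁻¹, ?_⟩
  rintro x ⟨π, rfl⟩
  exact Qre_le_bound ι hρpos hρsum hu hγ0 hγ1 h (π h)

lemma Vstar_modIndep_aux {π1 : Policy Ahat P Ept} {p1 : P}
    (hρpos : ∀ wh (aw : Ahat) (e : Ept), 0 < ρ wh aw e)
    (hρsum : ∀ wh (aw : Ahat), ∑ e, ρ wh aw e = 1)
    (hu : ∀ wh, u wh ∈ Set.Icc (0 : ℝ) 1)
    (hγ0 : 0 < γ) (hγ1 : γ < 1) (hp1 : ι p1 = π1)
    (hopt : ∀ h : Hist Ahat P Ept,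
      Vre ι ρ u γ π1 h = ⨆ π : Policy Ahat P Ept, Vre ι ρ u γ π h) :
    ∀ (n : ℕ) (h h' : Hist Ahat P Ept), hworld h = hworld h' →
      Qre ι ρ u γ h (π1 h) ≤ Qre ι ρ u γ h' (π1 h') + γ ^ n * (1 - γ)⁻¹ := by
  intro n
  induction n with
  | zero =>
    intro h h' _
    have h1 := Qre_le_bound ι hρpos hρsum hu hγ0 hγ1 h (π1 h)
    have h2 := Qre_nonneg ι hρpos hρsum hu hγ0 h' (π1 h')
    have h3 : γ ^ 0 * (1 - γ)⁻¹ = (1 - γ)⁻¹ := by simp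
    rw [h3]
    linarith
  | succ n ih =>
    intro h h' hw
    set b : Act Ahat P := ((π1 h).1, p1) with hb
    have hterm : ∀ e : Ept,
        Qre ι ρ u γ (h ++ [(π1 h, e)]) (ι (π1 h).2 (h ++ [(π1 h, e)])) ≤
          Qre ι ρ u γ (h' ++ [(b, e)]) (π1 (h' ++ [(b, e)])) + γ ^ n * (1 - γ)⁻¹ := by
      intro e
      have h1 := Qre_le_opt ι hρpos hρsum hu hγ0 hγ1 hopt
        (h ++ [(π1 h, e)]) (ι (π1 h).2 (h ++ [(π1 h, e)]))
      have h2 : hworld (h ++ [(π1 h, e)]) = hworld (h' ++ [(b, e)]) := by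
        rw [hworld_append, hworld_append, hw, hb]
      exact h1.trans (ih _ _ h2)
    have hB1 := Qre_bellman ι hρpos hρsum hu hγ0 hγ1 h (π1 h)
    have hB2 := Qre_bellman ι hρpos hρsum hu hγ0 hγ1 h' b
    have hE0 : EUre ι ρ u h (π1 h) 0 = EUre ι ρ u h' b 0 := by
      show (∑ e, ρ (hworld h) (π1 h).1 e * u (hworld h ++ [((π1 h).1, e)])) = _
      rw [hw]; rfl
    have hcont : ∀ e, ι b.2 (h' ++ [(b, e)]) = π1 (h' ++ [(b, e)]) := by
      intro e; rw [hb]; simp [hp1]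
    have hsum_le :
        ∑ e, ρ (hworld h) (π1 h).1 e *
            Qre ι ρ u γ (h ++ [(π1 h, e)]) (ι (π1 h).2 (h ++ [(π1 h, e)])) ≤
          (∑ e, ρ (hworld h') b.1 e *
            Qre ι ρ u γ (h' ++ [(b, e)]) (π1 (h' ++ [(b, e)]))) + γ ^ n * (1 - γ)⁻¹ := by
      have hρeq : ∀ e, ρ (hworld h) (π1 h).1 e = ρ (hworld h') b.1 e := by
        intro e; rw [hw]
      calc ∑ e, ρ (hworld h) (π1 h).1 e *
              Qre ι ρ u γ (h ++ [(π1 h, e)]) (ι (π1 h).2 (h ++ [(π1 h, e)]))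
          ≤ ∑ e, ρ (hworld h) (π1 h).1 e *
              (Qre ι ρ u γ (h' ++ [(b, e)]) (π1 (h' ++ [(b, e)])) + γ ^ n * (1 - γ)⁻¹) :=
            Finset.sum_le_sum fun e _ =>
              mul_le_mul_of_nonneg_left (hterm e) (hρpos _ _ _).le
        _ = (∑ e, ρ (hworld h') b.1 e *
              Qre ι ρ u γ (h' ++ [(b, e)]) (π1 (h' ++ [(b, e)]))) +
              (∑ e, ρ (hworld h) (π1 h).1 e) * (γ ^ n * (1 - γ)⁻¹) := by
            rw [Finset.sum_mul]
            rw [← Finset.sum_add_distrib]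
            refine Finset.sum_congr rfl fun e _ => ?_
            rw [hρeq e]; ring
        _ = _ := by rw [hρsum]; ring
    have hQb : Qre ι ρ u γ h' b ≤ Qre ι ρ u γ h' (π1 h') :=
      Qre_le_opt ι hρpos hρsum hu hγ0 hγ1 hopt h' b
    have hcont' : (∑ e, ρ (hworld h') b.1 e *
        Qre ι ρ u γ (h' ++ [(b, e)]) (ι b.2 (h' ++ [(b, e)]))) =
        ∑ e, ρ (hworld h') b.1 e *
        Qre ι ρ u γ (h' ++ [(b, e)]) (π1 (h' ++ [(b, e)])) :=
      Finset.sum_congr rfl fun e _ => by rw [hcont e]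
    rw [hB1]
    rw [hB2, hcont'] at hQb
    have hγpow : γ * (γ ^ n * (1 - γ)⁻¹) = γ ^ (n + 1) * (1 - γ)⁻¹ := by ring
    calc EUre ι ρ u h (π1 h) 0 + γ * ∑ e, ρ (hworld h) (π1 h).1 e *
            Qre ι ρ u γ (h ++ [(π1 h, e)]) (ι (π1 h).2 (h ++ [(π1 h, e)]))
        ≤ EUre ι ρ u h' b 0 + γ * ((∑ e, ρ (hworld h') b.1 e *
            Qre ι ρ u γ (h' ++ [(b, e)]) (π1 (h' ++ [(b, e)]))) + γ ^ n * (1 - γ)⁻¹) := by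
          rw [hE0]
          exact add_le_add_right (mul_le_mul_of_nonneg_left hsum_le hγ0.le) _
      _ = (EUre ι ρ u h' b 0 + γ * ∑ e, ρ (hworld h') b.1 e *
            Qre ι ρ u γ (h' ++ [(b, e)]) (π1 (h' ++ [(b, e)]))) + γ ^ (n + 1) * (1 - γ)⁻¹ := by
          ring
      _ ≤ Qre ι ρ u γ h' (π1 h') + γ ^ (n + 1) * (1 - γ)⁻¹ :=
          add_le_add_left hQb _

lemma Vstar_modIndep {π1 : Policy Ahat P Ept} {p1 : P}
    (hρpos : ∀ wh (aw : Ahat) (e : Ept), 0 < ρ wh aw e)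
    (hρsum : ∀ wh (aw : Ahat), ∑ e, ρ wh aw e = 1)
    (hu : ∀ wh, u wh ∈ Set.Icc (0 : ℝ) 1)
    (hγ0 : 0 < γ) (hγ1 : γ < 1) (hp1 : ι p1 = π1)
    (hopt : ∀ h : Hist Ahat P Ept,
      Vre ι ρ u γ π1 h = ⨆ π : Policy Ahat P Ept, Vre ι ρ u γ π h)
    (h h' : Hist Ahat P Ept) (hw : hworld h = hworld h') :
    Qre ι ρ u γ h (π1 h) = Qre ι ρ u γ h' (π1 h') := by
  have key : ∀ (g g' : Hist Ahat P Ept), hworld g = hworld g' →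
      Qre ι ρ u γ g (π1 g) ≤ Qre ι ρ u γ g' (π1 g') := by
    intro g g' hgw
    have htend : Filter.Tendsto
        (fun n : ℕ => Qre ι ρ u γ g' (π1 g') + γ ^ n * (1 - γ)⁻¹)
        Filter.atTop (nhds (Qre ι ρ u γ g' (π1 g') + 0 * (1 - γ)⁻¹)) :=
      Filter.Tendsto.const_add _
        (Filter.Tendsto.mul_const _
          (tendsto_pow_atTop_nhds_zero_of_lt_one hγ0.le hγ1))
    rw [zero_mul, add_zero] at htend
    refine ge_of_tendsto htend ?_
    exact Filter.Eventually.of_forall fun n =>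
      Vstar_modIndep_aux ι hρpos hρsum hu hγ0 hγ1 hp1 hopt n g g' hgw
  exact le_antisymm (key h h' hw) (key h' h hw.symm)

lemma step_opt {π1 : Policy Ahat P Ept} {p1 : P}
    (hρpos : ∀ wh (aw : Ahat) (e : Ept), 0 < ρ wh aw e)
    (hρsum : ∀ wh (aw : Ahat), ∑ e, ρ wh aw e = 1)
    (hu : ∀ wh, u wh ∈ Set.Icc (0 : ℝ) 1)
    (hγ0 : 0 < γ) (hγ1 : γ < 1) (hp1 : ι p1 = π1)
    (hopt : ∀ h : Hist Ahat P Ept,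
      Vre ι ρ u γ π1 h = ⨆ π : Policy Ahat P Ept, Vre ι ρ u γ π h)
    (h : Hist Ahat P Ept) (a : Act Ahat P)
    (hQ : Qre ι ρ u γ h a = Qre ι ρ u γ h (π1 h)) (e : Ept) :
    Qre ι ρ u γ (h ++ [(a, e)]) (ι a.2 (h ++ [(a, e)])) =
      Qre ι ρ u γ (h ++ [(a, e)]) (π1 (h ++ [(a, e)])) := by
  have hb : ((a.1, p1) : Act Ahat P).2 = p1 := rfl
  -- termwise inequality
  have hterm : ∀ e : Ept,
      Qre ι ρ u γ (h ++ [(a, e)]) (ι a.2 (h ++ [(a, e)])) ≤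
        Qre ι ρ u γ (h ++ [(a, e)]) (π1 (h ++ [(a, e)])) := fun e =>
    Qre_le_opt ι hρpos hρsum hu hγ0 hγ1 hopt _ _
  -- Bellman expansions
  have hB1 := Qre_bellman ι hρpos hρsum hu hγ0 hγ1 h a
  have hB2 := Qre_bellman ι hρpos hρsum hu hγ0 hγ1 h ((a.1, p1) : Act Ahat P)
  have hE0 : EUre ι ρ u h a 0 = EUre ι ρ u h ((a.1, p1) : Act Ahat P) 0 := rfl
  have hmod : ∀ e : Ept,
      Qre ι ρ u γ (h ++ [((a.1, p1), e)]) (π1 (h ++ [((a.1, p1), e)])) =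
        Qre ι ρ u γ (h ++ [(a, e)]) (π1 (h ++ [(a, e)])) := by
    intro e
    refine Vstar_modIndep ι hρpos hρsum hu hγ0 hγ1 hp1 hopt _ _ ?_
    rw [hworld_append, hworld_append]
  have hcont : ∀ e : Ept, ι ((a.1, p1) : Act Ahat P).2 (h ++ [((a.1, p1), e)]) =
      π1 (h ++ [((a.1, p1), e)]) := by
    intro e; rw [hb, hp1]
  have hsumeq : (∑ e, ρ (hworld h) ((a.1, p1) : Act Ahat P).1 e *
        Qre ι ρ u γ (h ++ [((a.1, p1), e)]) (ι ((a.1, p1) : Act Ahat P).2 (h ++ [((a.1, p1), e)]))) =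
      ∑ e, ρ (hworld h) a.1 e *
        Qre ι ρ u γ (h ++ [(a, e)]) (π1 (h ++ [(a, e)])) := by
    refine Finset.sum_congr rfl fun e _ => ?_
    rw [hcont e, hmod e]
  have hQb : Qre ι ρ u γ h ((a.1, p1) : Act Ahat P) = EUre ι ρ u h a 0 +
      γ * ∑ e, ρ (hworld h) a.1 e *
        Qre ι ρ u γ (h ++ [(a, e)]) (π1 (h ++ [(a, e)])) := by
    rw [hB2, ← hE0, hsumeq]
  have hle : Qre ι ρ u γ h ((a.1, p1) : Act Ahat P) ≤ Qre ι ρ u γ h a := by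
    rw [hQ]; exact Qre_le_opt ι hρpos hρsum hu hγ0 hγ1 hopt h ((a.1, p1) : Act Ahat P)
  rw [hQb, hB1] at hle
  have hsums : ∑ e, ρ (hworld h) a.1 e *
        Qre ι ρ u γ (h ++ [(a, e)]) (π1 (h ++ [(a, e)])) ≤
      ∑ e, ρ (hworld h) a.1 e *
        Qre ι ρ u γ (h ++ [(a, e)]) (ι a.2 (h ++ [(a, e)])) := by
    have := (add_le_add_iff_left (EUre ι ρ u h a 0)).mp hle
    exact le_of_mul_le_mul_left this hγ0
  have hzero : ∑ e, ρ (hworld h) a.1 e *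
      (Qre ι ρ u γ (h ++ [(a, e)]) (π1 (h ++ [(a, e)])) -
        Qre ι ρ u γ (h ++ [(a, e)]) (ι a.2 (h ++ [(a, e)]))) = 0 := by
    have hnn : ∀ e ∈ Finset.univ, 0 ≤ ρ (hworld h) a.1 e *
        (Qre ι ρ u γ (h ++ [(a, e)]) (π1 (h ++ [(a, e)])) -
          Qre ι ρ u γ (h ++ [(a, e)]) (ι a.2 (h ++ [(a, e)]))) := fun e _ =>
      mul_nonneg (hρpos _ _ _).le (sub_nonneg.mpr (hterm e))
    have hle0 : ∑ e, ρ (hworld h) a.1 e *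
        (Qre ι ρ u γ (h ++ [(a, e)]) (π1 (h ++ [(a, e)])) -
          Qre ι ρ u γ (h ++ [(a, e)]) (ι a.2 (h ++ [(a, e)]))) ≤ 0 := by
      have : ∑ e, ρ (hworld h) a.1 e *
          (Qre ι ρ u γ (h ++ [(a, e)]) (π1 (h ++ [(a, e)])) -
            Qre ι ρ u γ (h ++ [(a, e)]) (ι a.2 (h ++ [(a, e)]))) =
          (∑ e, ρ (hworld h) a.1 e *
            Qre ι ρ u γ (h ++ [(a, e)]) (π1 (h ++ [(a, e)]))) -
          ∑ e, ρ (hworld h) a.1 e *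
            Qre ι ρ u γ (h ++ [(a, e)]) (ι a.2 (h ++ [(a, e)])) := by
        rw [← Finset.sum_sub_distrib]
        exact Finset.sum_congr rfl fun e _ => by ring
      rw [this]
      linarith
    exact le_antisymm hle0 (Finset.sum_nonneg hnn)
  have hall := (Finset.sum_eq_zero_iff_of_nonneg (by
    intro e _
    exact mul_nonneg (hρpos _ _ _).le (sub_nonneg.mpr (hterm e)))).mp hzero
  have := hall e (Finset.mem_univ e)
  have hdiff : Qre ι ρ u γ (h ++ [(a, e)]) (π1 (h ++ [(a, e)])) -
      Qre ι ρ u γ (h ++ [(a, e)]) (ι a.2 (h ++ [(a, e)])) = 0 := by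
    rcases mul_eq_zero.mp this with hc | hc
    · exact absurd hc (hρpos _ _ _).ne'
    · exact hc
  linarith [hdiff]

end Proof

lemma rollout_opt {Ahat P Ept : Type*} [Fintype Ept]
    (ι : P → Policy Ahat P Ept)
    {ρ : List (Ahat × Ept) → Ahat → Ept → ℝ}
    {u : List (Ahat × Ept) → ℝ} {γ : ℝ}
    {π1 : Policy Ahat P Ept} {p1 : P}
    (hρpos : ∀ wh (aw : Ahat) (e : Ept), 0 < ρ wh aw e)
    (hρsum : ∀ wh (aw : Ahat), ∑ e, ρ wh aw e = 1)
    (hu : ∀ wh, u wh ∈ Set.Icc (0 : ℝ) 1)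
    (hγ0 : 0 < γ) (hγ1 : γ < 1) (hp1 : ι p1 = π1)
    (hopt : ∀ h : Hist Ahat P Ept,
      Vre ι ρ u γ π1 h = ⨆ π : Policy Ahat P Ept, Vre ι ρ u γ π h)
    (es : List Ept) :
    ∀ (h : Hist Ahat P Ept) (π : Policy Ahat P Ept),
      Qre ι ρ u γ h (π h) = Qre ι ρ u γ h (π1 h) →
      Qre ι ρ u γ (build ι h π es).1 ((build ι h π es).2 (build ι h π es).1) =
        Qre ι ρ u γ (build ι h π es).1 (π1 (build ι h π es).1) := by
  induction es with
  | nil => intro h π hQ; simpa [build] using hQ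
  | cons e es ih =>
    intro h π hQ
    rw [build]
    exact ih _ _ (step_opt ι hρpos hρsum hu hγ0 hγ1 hp1 hopt h (π h) hQ e)

/-- **Realistic policy-modifying agents make safe modifications.** -/
theorem realistic_agents_safe_modifications
    {Ahat P Ept : Type*} [Fintype Ahat] [Nonempty Ahat] [Fintype Ept] [Nonempty Ept]
    (ι : P → Policy Ahat P Ept)
    (ρ : List (Ahat × Ept) → Ahat → Ept → ℝ)
    (hρpos : ∀ wh (aw : Ahat) (e : Ept), 0 < ρ wh aw e)
    (hρsum : ∀ wh (aw : Ahat), ∑ e, ρ wh aw e = 1)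
    (u : List (Ahat × Ept) → ℝ)
    (hu : ∀ wh, u wh ∈ Set.Icc (0 : ℝ) 1)
    (γ : ℝ) (hγ0 : 0 < γ) (hγ1 : γ < 1)
    (π1 : Policy Ahat P Ept) (p1 : P) (hp1 : ι p1 = π1)
    (hopt : ∀ h : Hist Ahat P Ept,
      Vre ι ρ u γ π1 h = ⨆ π : Policy Ahat P Ept, Vre ι ρ u γ π h)
    (es : List Ept) :
    Qre ι ρ u γ (build ι [] π1 es).1
        ((build ι [] π1 es).2 (build ι [] π1 es).1) =
      Qre ι ρ u γ (build ι [] π1 es).1 (π1 (build ι [] π1 es).1) := by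
  exact rollout_opt ι hρpos hρsum hu hγ0 hγ1 hp1 hopt es [] π1 rfl

end Stmt3
end
end

section
/- In the policy self-modification model with a modification-independent belief ρ, let π be a deterministic policy and let π̂ be its associated world policy. Then the realistic measure ρ^π_re and the standard measure ρ^π̂ induce the same distribution on world histories: for every world history âê_{<t}, ρ^π̂(âê_{<t}) equals the ρ^π_re-probability of the set of histories whose world part is âê_{<t}. -/
/-!
STATEMENT 7 (Everitt et al., Lemma "Value-equivalence with standard model",
first part).

Policy self-modification model: world actions `Ahat` (finite), percepts `Ept`
(finite), policy names `P` with naming map `ι : P → Policy`.  The belief `ρ`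
is modification-independent (enforced by its type).  Given an initial
(deterministic) policy `π`, the realistic measure `ρ^π_re` takes each action
deterministically from the policy currently in force (initially `π`, then the
policy named by the preceding action) and samples each percept from `ρ`; its
restriction to finite histories is the function `probRe ι ρ π []`.  For a
world policy `pw : world histories → Ahat`, the induced measure `ρ^pw` on
world histories is `probW ρ pw []`.

A world policy `pw` is an *associated world policy* of `π` if for every
history `h` with positive `ρ^π_re`-probability, `pw` applied to the world part
of `h` is the world-action component of the action that the policy in force
after `h` (namely `polAt ι π h`) takes at `h`; on world histories without a
positive-probability extension `pw` is arbitrary.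

Claim: `ρ^π_re` and `ρ^pw` induce the same distribution on world histories:
for every world history `wh`, `ρ^pw(wh)` equals the total
`ρ^π_re`-probability of the set of histories whose world part is `wh`.
-/

noncomputable section

namespace Stmt7

/-- Actions: a world action together with the name of the policy selected for
the next step. -/
abbrev Act (Ahat P : Type*) : Type _ := Ahat × P

/-- Histories: finite sequences of action–percept pairs. -/
abbrev Hist (Ahat P Ept : Type*) : Type _ := List (Act Ahat P × Ept)

/-- Policies: maps from histories to actions. -/
abbrev Policy (Ahat P Ept : Type*) : Type _ := Hist Ahat P Ept → Act Ahat P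

/-- The world part of a history (policy-name components deleted). -/
def hworld {Ahat P Ept : Type*} (h : Hist Ahat P Ept) : List (Ahat × Ept) :=
  h.map fun pe => (pe.1.1, pe.2)

/-- A function on histories is modification-independent if its value depends
only on the world part of its argument. -/
def ModIndep {Ahat P Ept α : Type*} (f : Hist Ahat P Ept → α) : Prop :=
  ∀ h h' : Hist Ahat P Ept, hworld h = hworld h' → f h = f h'


/-- The policy in force immediately after history `h`: the initial policy `π`
if `h` is empty, otherwise the policy named by the last action of `h`. -/
def polAt {Ahat P Ept : Type*} (ι : P → Policy Ahat P Ept)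
    (π : Policy Ahat P Ept) (h : Hist Ahat P Ept) : Policy Ahat P Ept :=
  match h.getLast? with
  | none => π
  | some ae => ι ae.1.2

open Classical in
/-- `probRe ι ρ π pre h` is the probability, under the realistic measure
started from the history `pre` with current policy `π`, that the next
`h.length` action–percept pairs are exactly `h` (actions are taken
deterministically by the evolving policies, percepts are sampled from `ρ`).
In particular `probRe ι ρ π [] h` is the `ρ^π_re`-probability of the history
`h`. -/
noncomputable def probRe {Ahat P Ept : Type*} (ι : P → Policy Ahat P Ept)
    (ρ : List (Ahat × Ept) → Ahat → Ept → ℝ) :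
    Policy Ahat P Ept → Hist Ahat P Ept → Hist Ahat P Ept → ℝ
  | _, _, [] => 1
  | π, pre, ae :: rest =>
      (if π pre = ae.1 then ρ (hworld pre) ae.1.1 ae.2 else 0) *
        probRe ι ρ (ι ae.1.2) (pre ++ [ae]) rest

open Classical in
/-- `probW ρ pw pre wh` is the probability, under the measure `ρ^pw` induced
by the world policy `pw` and the belief `ρ`, that the `wh.length` world
action–percept pairs following the world history `pre` are exactly `wh`.
In particular `probW ρ pw [] wh` is `ρ^pw(wh)`. -/
noncomputable def probW {Ahat Ept : Type*}
    (ρ : List (Ahat × Ept) → Ahat → Ept → ℝ)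
    (pw : List (Ahat × Ept) → Ahat) :
    List (Ahat × Ept) → List (Ahat × Ept) → ℝ
  | _, [] => 1
  | pre, ae :: rest =>
      (if pw pre = ae.1 then ρ pre ae.1 ae.2 else 0) *
        probW ρ pw (pre ++ [ae]) rest

section Aux

variable {Ahat P Ept : Type*}

/-- The policy in force after consuming `t`, starting from `π`, in
recursion-friendly form. -/
def polAtFrom (ι : P → Policy Ahat P Ept) :
    Policy Ahat P Ept → Hist Ahat P Ept → Policy Ahat P Ept
  | π, [] => π
  | _, ae :: t => polAtFrom ι (ι ae.1.2) t

lemma hworld_append (h h' : Hist Ahat P Ept) :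
    hworld (h ++ h') = hworld h ++ hworld h' := List.map_append

lemma polAtFrom_eq (ι : P → Policy Ahat P Ept) :
    ∀ (t : Hist Ahat P Ept) (π : Policy Ahat P Ept), polAtFrom ι π t = polAt ι π t
  | [], π => rfl
  | ae :: t, π => by
      rw [polAtFrom, polAtFrom_eq ι t]
      cases t with
      | nil => rfl
      | cons x l =>
          unfold polAt
          rw [List.getLast?_cons_cons]
          cases hl : (x :: l).getLast? with
          | none => simp at hl
          | some y => rfl

lemma probRe_nonneg (ι : P → Policy Ahat P Ept)
    (ρ : List (Ahat × Ept) → Ahat → Ept → ℝ)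
    (hρ : ∀ wh (aw : Ahat) (e : Ept), 0 ≤ ρ wh aw e) :
    ∀ (h pre : Hist Ahat P Ept) (π : Policy Ahat P Ept),
      0 ≤ probRe ι ρ π pre h
  | [], _, _ => zero_le_one
  | ae :: t, pre, π => by
      rw [probRe]
      refine mul_nonneg ?_ (probRe_nonneg ι ρ hρ t _ _)
      split <;> simp [hρ]

lemma key_lemma (ι : P → Policy Ahat P Ept)
    (ρ : List (Ahat × Ept) → Ahat → Ept → ℝ)
    (hρpos : ∀ wh (aw : Ahat) (e : Ept), 0 < ρ wh aw e)
    (pw : List (Ahat × Ept) → Ahat) :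
    ∀ (wh : List (Ahat × Ept)) (π' : Policy Ahat P Ept) (pre : Hist Ahat P Ept),
      (∀ t : Hist Ahat P Ept, 0 < probRe ι ρ π' pre t →
        pw (hworld pre ++ hworld t) = ((polAtFrom ι π' t) (pre ++ t)).1) →
      probW ρ pw (hworld pre) wh =
        ∑' t : {t : Hist Ahat P Ept // hworld t = wh}, probRe ι ρ π' pre t.1
  | [], π', pre => by
      intro _
      rw [probW]
      rw [tsum_eq_single (⟨[], rfl⟩ : {t : Hist Ahat P Ept // hworld t = []})]
      · rfl
      · rintro ⟨b, hb⟩ hne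
        exfalso
        apply hne
        have : b = [] := by simpa [hworld] using hb
        simp [this]
  | (a, e) :: rest, π', pre => by
      intro hyp
      have hpw : pw (hworld pre) = (π' pre).1 := by
        have h0 : (0 : ℝ) < probRe ι ρ π' pre [] := by rw [probRe]; norm_num
        simpa [hworld, polAtFrom] using hyp [] h0
      by_cases hA : (π' pre).1 = a
      · -- the policy takes world action `a` here
        set p₀ : P := (π' pre).2 with hp₀
        have hpe : π' pre = (a, p₀) := by
          rw [hp₀, ← hA]
        set pre' : Hist Ahat P Ept := pre ++ [((a, p₀), e)] with hpre'
        have hwpre' : hworld pre' = hworld pre ++ [(a, e)] := by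
          rw [hpre', hworld_append]; rfl
        have hyp' : ∀ t : Hist Ahat P Ept, 0 < probRe ι ρ (ι p₀) pre' t →
            pw (hworld pre' ++ hworld t) = ((polAtFrom ι (ι p₀) t) (pre' ++ t)).1 := by
          intro t ht
          have hpos : 0 < probRe ι ρ π' pre (((a, p₀), e) :: t) := by
            rw [probRe, if_pos hpe]
            exact mul_pos (hρpos _ _ _) ht
          have h1 := hyp (((a, p₀), e) :: t) hpos
          have e1 : hworld pre ++ hworld (((a, p₀), e) :: t)
              = hworld pre' ++ hworld t := by
            simp [hpre', hworld]
          have e2 : pre ++ ((a, p₀), e) :: t = pre' ++ t := by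
            simp [hpre']
          rw [e1, e2] at h1
          exact h1
        have IH := key_lemma ι ρ hρpos pw rest (ι p₀) pre' hyp'
        rw [probW, if_pos (by rw [hpw, hA]), ← hwpre', IH]
        -- now compute the RHS tsum
        have hbij :
            (∑' t : {t : Hist Ahat P Ept // hworld t = (a, e) :: rest},
                probRe ι ρ π' pre t.1)
              = ∑' t' : {t' : Hist Ahat P Ept // hworld t' = rest},
                  ρ (hworld pre) a e * probRe ι ρ (ι p₀) pre' t'.1 := by
          apply tsum_eq_tsum_of_ne_zero_bij
            (i := fun t' => ⟨((a, p₀), e) :: t'.1.1, by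
              simpa [hworld] using t'.1.2⟩)
          · intro x y hh
            have h1 : ((a, p₀), e) :: x.1.1 = ((a, p₀), e) :: y.1.1 :=
              congrArg Subtype.val hh
            have h2 : x.1.1 = y.1.1 := by simpa using h1
            exact Subtype.ext (Subtype.ext h2)
          · rintro ⟨t, ht⟩ hne
            simp only [Function.mem_support] at hne
            cases t with
            | nil => simp [hworld] at ht
            | cons x t₂ =>
                have ht' := ht
                simp only [hworld, List.map_cons, List.cons.injEq,
                  Prod.mk.injEq] at ht'
                obtain ⟨⟨hx1, hx2⟩, ht₂⟩ := ht'
                have ht₂ : hworld t₂ = rest := ht₂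
                rw [probRe] at hne
                have hxpe : π' pre = x.1 := by
                  by_contra hc
                  rw [if_neg hc, zero_mul] at hne
                  exact hne rfl
                have hxfull : x = ((a, p₀), e) := by
                  have : x.1 = (a, p₀) := by rw [← hxpe, hpe]
                  calc x = (x.1, x.2) := rfl
                    _ = ((a, p₀), e) := by rw [this, hx2]
                have hprob : probRe ι ρ (ι p₀) pre' t₂ ≠ 0 := by
                  intro hz
                  apply hne
                  rw [hxfull]
                  have : pre ++ [((a, p₀), e)] = pre' := rfl
                  rw [this, hz, mul_zero]
                have hg : ρ (hworld pre) a e * probRe ι ρ (ι p₀) pre' t₂ ≠ 0 :=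
                  mul_ne_zero (ne_of_gt (hρpos _ _ _)) hprob
                refine ⟨⟨⟨t₂, ht₂⟩, hg⟩, ?_⟩
                simp [hxfull]
          · rintro ⟨⟨t', ht'⟩, hs⟩
            rw [probRe, if_pos hpe]
        rw [hbij, tsum_mul_left]
      · -- the policy does not take world action `a`: both sides vanish
        have hz : ∀ t : {t : Hist Ahat P Ept // hworld t = (a, e) :: rest},
            probRe ι ρ π' pre t.1 = 0 := by
          rintro ⟨t, ht⟩
          cases t with
          | nil => simp [hworld] at ht
          | cons x t₂ =>
              have ht' := ht
              simp only [hworld, List.map_cons, List.cons.injEq,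
                Prod.mk.injEq] at ht'
              obtain ⟨⟨hx1, hx2⟩, ht₂⟩ := ht'
              rw [probRe, if_neg, zero_mul]
              intro hc
              exact hA (by rw [hc, hx1])
        rw [tsum_congr hz, tsum_zero, probW, if_neg, zero_mul]
        rw [hpw]
        exact hA

end Aux

/-- **The realistic measure and the associated-world-policy measure agree on
world histories.** -/
theorem realistic_measure_eq_world_measure
    {Ahat P Ept : Type*} [Fintype Ahat] [Nonempty Ahat] [Fintype Ept] [Nonempty Ept]
    (ι : P → Policy Ahat P Ept)
    (ρ : List (Ahat × Ept) → Ahat → Ept → ℝ)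
    (hρpos : ∀ wh (aw : Ahat) (e : Ept), 0 < ρ wh aw e)
    (hρsum : ∀ wh (aw : Ahat), ∑ e, ρ wh aw e = 1)
    (π : Policy Ahat P Ept)
    (pw : List (Ahat × Ept) → Ahat)
    (hassoc : ∀ h : Hist Ahat P Ept,
      0 < probRe ι ρ π [] h → pw (hworld h) = ((polAt ι π h) h).1)
    (wh : List (Ahat × Ept)) :
    probW ρ pw [] wh =
      ∑' h : {h : Hist Ahat P Ept // hworld h = wh}, probRe ι ρ π [] h.1 := by
  have h := key_lemma ι ρ hρpos pw wh π [] ?_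
  · simpa [hworld] using h
  · intro t ht
    rw [polAtFrom_eq]
    simpa [hworld] using hassoc t ht

end Stmt7
end
end

section
/- In the self-modification model with modification-independent belief ρ, for any modification-independent instantaneous utility function u_t there exists a policy π* that is modification-independent, non-modifying (it always selects itself as the next policy), and optimal with respect to the realistic value function V^re_t, i.e. V^{re,π*}_t(h) = sup over policies π of V^{re,π}_t(h) for every history h. -/
/-!
STATEMENT 9 (Everitt et al., Theorem "Optimal policy existence").

Policy self-modification model: world actions `Ahat` (finite), percepts `Ept`
(finite), policy names `P` with naming map `ι : P → Policy`.  The belief `ρ`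
and the instantaneous utility function `u` are modification-independent
(enforced by their types).  The realistic value functions `Qre`/`Vre` give the
expected discounted `u`-utility where future actions are chosen by the
policies selected by the preceding actions.

As in the paper, non-modifying policies built from world policies are
nameable: for every world policy `pw : world histories → Ahat` there is a name
`p` with `ι p = fun h => (pw (world part of h), p)`, i.e. the lifted policy
that plays `pw` and always selects itself (hypothesis `hname`; in the paper's
utility-modification instantiation every utility function names its optimal
policy, and in the policy-modification instantiation names can be added, so
this is part of the model).

Claim: there exists a policy `π*` that is modification-independent,
non-modifying (on every history it selects a name mapping to itself, i.e.
`ι (π* h).2 = π*`), and optimal with respect to the realistic value function: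
`V^{re,π*}(h) = ⨆ π, V^{re,π}(h)` for every history `h`.
-/

noncomputable section

namespace Stmt9

/-- Actions: a world action together with the name of the policy selected for
the next step. -/
abbrev Act (Ahat P : Type*) : Type _ := Ahat × P

/-- Histories: finite sequences of action–percept pairs. -/
abbrev Hist (Ahat P Ept : Type*) : Type _ := List (Act Ahat P × Ept)

/-- Policies: maps from histories to actions. -/
abbrev Policy (Ahat P Ept : Type*) : Type _ := Hist Ahat P Ept → Act Ahat P

/-- The world part of a history (policy-name components deleted). -/
def hworld {Ahat P Ept : Type*} (h : Hist Ahat P Ept) : List (Ahat × Ept) :=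
  h.map fun pe => (pe.1.1, pe.2)

/-- A function on histories is modification-independent if its value depends
only on the world part of its argument. -/
def ModIndep {Ahat P Ept α : Type*} (f : Hist Ahat P Ept → α) : Prop :=
  ∀ h h' : Hist Ahat P Ept, hworld h = hworld h' → f h = f h'


/-- `EUre ι ρ u h a n`: expected `u`-utility received `n` steps after taking
action `a` following history `h`, with percepts sampled from `ρ` and every
future action taken by the policy selected by the preceding action (the
realistic measure `ρ_re`). -/
def EUre {Ahat P Ept : Type*} [Fintype Ept] (ι : P → Policy Ahat P Ept)
    (ρ : List (Ahat × Ept) → Ahat → Ept → ℝ) (u : List (Ahat × Ept) → ℝ) :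
    Hist Ahat P Ept → Act Ahat P → ℕ → ℝ
  | h, a, 0 => ∑ e, ρ (hworld h) a.1 e * u (hworld h ++ [(a.1, e)])
  | h, a, n + 1 =>
      ∑ e, ρ (hworld h) a.1 e *
        EUre ι ρ u (h ++ [(a, e)]) (ι a.2 (h ++ [(a, e)])) n

/-- The realistic `Q`-value: expected discounted `u`-utility when all future
actions are chosen by the policies selected through self-modification. -/
def Qre {Ahat P Ept : Type*} [Fintype Ept] (ι : P → Policy Ahat P Ept)
    (ρ : List (Ahat × Ept) → Ahat → Ept → ℝ) (u : List (Ahat × Ept) → ℝ)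
    (γ : ℝ) (h : Hist Ahat P Ept) (a : Act Ahat P) : ℝ :=
  ∑' n : ℕ, γ ^ n * EUre ι ρ u h a n

/-- The realistic `V`-value of a policy `π` (a policy argument beyond the next
action is superfluous, since the action determines the next policy). -/
def Vre {Ahat P Ept : Type*} [Fintype Ept] (ι : P → Policy Ahat P Ept)
    (ρ : List (Ahat × Ept) → Ahat → Ept → ℝ) (u : List (Ahat × Ept) → ℝ)
    (γ : ℝ) (π : Policy Ahat P Ept) (h : Hist Ahat P Ept) : ℝ :=
  Qre ι ρ u γ h (π h)

section Aux
variable {Ahat P Ept : Type*} [Fintype Ept]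

lemma mem_unit_abs {x : ℝ} (hx : x ∈ Set.Icc (0 : ℝ) 1) : |x| ≤ 1 :=
  abs_le.2 ⟨by linarith [hx.1], hx.2⟩

lemma summable_disc {γ : ℝ} (hγ0 : 0 ≤ γ) (hγ1 : γ < 1) {F : ℕ → ℝ}
    (hF : ∀ n, |F n| ≤ 1) : Summable fun n : ℕ => γ ^ n * F n := by
  apply Summable.of_abs
  apply Summable.of_nonneg_of_le (fun n => abs_nonneg _) _
    (summable_geometric_of_lt_one hγ0 hγ1)
  intro n
  rw [abs_mul, abs_pow, abs_of_nonneg hγ0]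
  calc γ ^ n * |F n| ≤ γ ^ n * 1 :=
        mul_le_mul_of_nonneg_left (hF n) (pow_nonneg hγ0 n)
    _ = γ ^ n := mul_one _

lemma tsum_disc_mem {γ : ℝ} (hγ0 : 0 ≤ γ) (hγ1 : γ < 1) {F : ℕ → ℝ}
    (hF : ∀ n, F n ∈ Set.Icc (0 : ℝ) 1) :
    (∑' n : ℕ, γ ^ n * F n) ∈ Set.Icc (0 : ℝ) (1 - γ)⁻¹ := by
  constructor
  · exact tsum_nonneg fun n => mul_nonneg (pow_nonneg hγ0 n) (hF n).1
  · have h1 : ∑' n : ℕ, γ ^ n * F n ≤ ∑' n : ℕ, γ ^ n := by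
      apply Summable.tsum_le_tsum _ (summable_disc hγ0 hγ1 fun n => mem_unit_abs (hF n))
        (summable_geometric_of_lt_one hγ0 hγ1)
      intro n
      calc γ ^ n * F n ≤ γ ^ n * 1 :=
            mul_le_mul_of_nonneg_left (hF n).2 (pow_nonneg hγ0 n)
        _ = γ ^ n := mul_one _
    rw [tsum_geometric_of_lt_one hγ0 hγ1] at h1
    exact h1

lemma key_tsum {γ : ℝ} (hγ0 : 0 ≤ γ) (hγ1 : γ < 1)
    (c v : Ept → ℝ) (F : ℕ → ℝ) (G : Ept → ℕ → ℝ)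
    (hF0 : F 0 = ∑ e, c e * v e)
    (hFs : ∀ n, F (n + 1) = ∑ e, c e * G e n)
    (hF : ∀ n, |F n| ≤ 1)
    (hG : ∀ e n, |G e n| ≤ 1) :
    ∑' n : ℕ, γ ^ n * F n = ∑ e, c e * (v e + γ * ∑' n : ℕ, γ ^ n * G e n) := by
  have hsum : Summable fun n : ℕ => γ ^ n * F n := summable_disc hγ0 hγ1 hF
  have hGsum : ∀ e, Summable fun n : ℕ => γ ^ n * G e n :=
    fun e => summable_disc hγ0 hγ1 (hG e)
  rw [Summable.tsum_eq_zero_add hsum]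
  have h1 : ∀ n : ℕ, γ ^ (n + 1) * F (n + 1) = ∑ e, (c e * γ) * (γ ^ n * G e n) := by
    intro n
    rw [hFs n, Finset.mul_sum]
    exact Finset.sum_congr rfl fun e _ => by ring
  calc γ ^ 0 * F 0 + ∑' n : ℕ, γ ^ (n + 1) * F (n + 1)
      = ∑ e, c e * v e + ∑' n : ℕ, ∑ e, (c e * γ) * (γ ^ n * G e n) := by
        rw [pow_zero, one_mul, hF0, tsum_congr h1]
    _ = ∑ e, c e * v e + ∑ e, (c e * γ) * ∑' n : ℕ, γ ^ n * G e n := by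
        congr 1
        rw [Summable.tsum_finsetSum fun e _ => (hGsum e).mul_left _]
        exact Finset.sum_congr rfl fun e _ => tsum_mul_left
    _ = ∑ e, c e * (v e + γ * ∑' n : ℕ, γ ^ n * G e n) := by
        rw [← Finset.sum_add_distrib]
        exact Finset.sum_congr rfl fun e _ => by ring

lemma weighted_mem {c f : Ept → ℝ} (hc : ∀ e, 0 ≤ c e) (hcs : ∑ e, c e = 1)
    (hf : ∀ e, f e ∈ Set.Icc (0 : ℝ) 1) : (∑ e, c e * f e) ∈ Set.Icc (0 : ℝ) 1 := by
  constructor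
  · exact Finset.sum_nonneg fun e _ => mul_nonneg (hc e) (hf e).1
  · calc ∑ e, c e * f e ≤ ∑ e, c e * 1 :=
        Finset.sum_le_sum fun e _ => mul_le_mul_of_nonneg_left (hf e).2 (hc e)
    _ = 1 := by simp [hcs]

omit [Fintype Ept] in
lemma hworld_append (h : Hist Ahat P Ept) (x : Act Ahat P × Ept) :
    hworld (h ++ [x]) = hworld h ++ [(x.1.1, x.2)] := by
  simp [hworld]

/-- Iterated expected utility of a (lifted) world policy on world histories. -/
def Wlift (ρ : List (Ahat × Ept) → Ahat → Ept → ℝ) (u : List (Ahat × Ept) → ℝ)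
    (pw : List (Ahat × Ept) → Ahat) : ℕ → List (Ahat × Ept) → ℝ
  | 0, wh => ∑ e, ρ wh (pw wh) e * u (wh ++ [(pw wh, e)])
  | n + 1, wh => ∑ e, ρ wh (pw wh) e * Wlift ρ u pw n (wh ++ [(pw wh, e)])

/-- Value of a world policy. -/
def Vw (ρ : List (Ahat × Ept) → Ahat → Ept → ℝ) (u : List (Ahat × Ept) → ℝ)
    (γ : ℝ) (pw : List (Ahat × Ept) → Ahat) (wh : List (Ahat × Ept)) : ℝ :=
  ∑' n : ℕ, γ ^ n * Wlift ρ u pw n wh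

/-- Optimal world value. -/
def Vstar (ρ : List (Ahat × Ept) → Ahat → Ept → ℝ) (u : List (Ahat × Ept) → ℝ)
    (γ : ℝ) (wh : List (Ahat × Ept)) : ℝ :=
  ⨆ pw : List (Ahat × Ept) → Ahat, Vw ρ u γ pw wh

/-- Optimal world action-value. -/
def Qstar (ρ : List (Ahat × Ept) → Ahat → Ept → ℝ) (u : List (Ahat × Ept) → ℝ)
    (γ : ℝ) (wh : List (Ahat × Ept)) (aw : Ahat) : ℝ :=
  ∑ e, ρ wh aw e * (u (wh ++ [(aw, e)]) + γ * Vstar ρ u γ (wh ++ [(aw, e)]))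

variable {ρ : List (Ahat × Ept) → Ahat → Ept → ℝ} {u : List (Ahat × Ept) → ℝ} {γ : ℝ}

section Bounds
variable (hρpos : ∀ wh (aw : Ahat) (e : Ept), 0 < ρ wh aw e)
  (hρsum : ∀ wh (aw : Ahat), ∑ e, ρ wh aw e = 1)
  (hu : ∀ wh, u wh ∈ Set.Icc (0 : ℝ) 1)
  (hγ0 : 0 < γ) (hγ1 : γ < 1)

include hρpos hρsum hu

lemma Wlift_mem (pw : List (Ahat × Ept) → Ahat) :
    ∀ (n : ℕ) (wh : List (Ahat × Ept)), Wlift ρ u pw n wh ∈ Set.Icc (0 : ℝ) 1 := by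
  intro n
  induction n with
  | zero =>
    intro wh
    exact weighted_mem (fun e => (hρpos _ _ e).le) (hρsum _ _) fun e => hu _
  | succ n ih =>
    intro wh
    exact weighted_mem (fun e => (hρpos _ _ e).le) (hρsum _ _) fun e => ih _

lemma EUre_mem (ι : P → Policy Ahat P Ept) :
    ∀ (n : ℕ) (h : Hist Ahat P Ept) (a : Act Ahat P),
      EUre ι ρ u h a n ∈ Set.Icc (0 : ℝ) 1 := by
  intro n
  induction n with
  | zero =>
    intro h a
    exact weighted_mem (fun e => (hρpos _ _ e).le) (hρsum _ _) fun e => hu _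
  | succ n ih =>
    intro h a
    exact weighted_mem (fun e => (hρpos _ _ e).le) (hρsum _ _) fun e => ih _ _

include hγ0 hγ1 in
lemma Vw_mem (pw : List (Ahat × Ept) → Ahat) (wh : List (Ahat × Ept)) :
    Vw ρ u γ pw wh ∈ Set.Icc (0 : ℝ) (1 - γ)⁻¹ :=
  tsum_disc_mem hγ0.le hγ1 fun n => Wlift_mem hρpos hρsum hu pw n wh

include hγ0 hγ1 in
lemma Qre_mem (ι : P → Policy Ahat P Ept) (h : Hist Ahat P Ept) (a : Act Ahat P) :
    Qre ι ρ u γ h a ∈ Set.Icc (0 : ℝ) (1 - γ)⁻¹ :=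
  tsum_disc_mem hγ0.le hγ1 fun n => EUre_mem hρpos hρsum hu ι n h a

include hγ0 hγ1 in
lemma Vw_rec (pw : List (Ahat × Ept) → Ahat) (wh : List (Ahat × Ept)) :
    Vw ρ u γ pw wh = ∑ e, ρ wh (pw wh) e *
      (u (wh ++ [(pw wh, e)]) + γ * Vw ρ u γ pw (wh ++ [(pw wh, e)])) := by
  exact key_tsum hγ0.le hγ1 _ _ _ _ (by simp [Wlift]) (fun n => by simp [Wlift])
    (fun n => mem_unit_abs (Wlift_mem hρpos hρsum hu pw n wh))
    (fun e n => mem_unit_abs (Wlift_mem hρpos hρsum hu pw n _))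

include hγ0 hγ1 in
lemma Qre_rec (ι : P → Policy Ahat P Ept) (h : Hist Ahat P Ept) (a : Act Ahat P) :
    Qre ι ρ u γ h a = ∑ e, ρ (hworld h) a.1 e *
      (u (hworld h ++ [(a.1, e)]) +
        γ * Qre ι ρ u γ (h ++ [(a, e)]) (ι a.2 (h ++ [(a, e)]))) := by
  exact key_tsum hγ0.le hγ1 _ _ _ _ (by simp [EUre]) (fun n => by simp [EUre])
    (fun n => mem_unit_abs (EUre_mem hρpos hρsum hu ι n h a))
    (fun e n => mem_unit_abs (EUre_mem hρpos hρsum hu ι n _ _))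

end Bounds

lemma Wlift_congr {pw1 pw2 : List (Ahat × Ept) → Ahat} :
    ∀ (n : ℕ) (wh : List (Ahat × Ept)),
      (∀ wh', wh <+: wh' → pw1 wh' = pw2 wh') →
      Wlift ρ u pw1 n wh = Wlift ρ u pw2 n wh := by
  intro n
  induction n with
  | zero =>
    intro wh hag
    have h0 := hag wh (List.prefix_refl wh)
    simp [Wlift, h0]
  | succ n ih =>
    intro wh hag
    have h0 := hag wh (List.prefix_refl wh)
    simp only [Wlift, h0]
    refine Finset.sum_congr rfl fun e _ => ?_
    rw [ih (wh ++ [(pw2 wh, e)])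
      (fun wh' hp => hag wh' ((List.prefix_append wh _).trans hp))]

lemma Vw_congr {pw1 pw2 : List (Ahat × Ept) → Ahat} (wh : List (Ahat × Ept))
    (hag : ∀ wh', wh <+: wh' → pw1 wh' = pw2 wh') :
    Vw ρ u γ pw1 wh = Vw ρ u γ pw2 wh :=
  tsum_congr fun n => by rw [Wlift_congr n wh hag]


section Star
variable [Fintype Ahat] [Nonempty Ahat]
variable (hρpos : ∀ wh (aw : Ahat) (e : Ept), 0 < ρ wh aw e)
  (hρsum : ∀ wh (aw : Ahat), ∑ e, ρ wh aw e = 1)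
  (hu : ∀ wh, u wh ∈ Set.Icc (0 : ℝ) 1)
  (hγ0 : 0 < γ) (hγ1 : γ < 1)

include hρpos hρsum hu hγ0 hγ1

lemma Vw_bddAbove (wh : List (Ahat × Ept)) :
    BddAbove (Set.range fun pw : List (Ahat × Ept) → Ahat => Vw ρ u γ pw wh) := by
  refine ⟨(1 - γ)⁻¹, ?_⟩
  rintro x ⟨pw, rfl⟩
  exact (Vw_mem hρpos hρsum hu hγ0 hγ1 pw wh).2

lemma Vw_le_Vstar (pw : List (Ahat × Ept) → Ahat) (wh : List (Ahat × Ept)) :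
    Vw ρ u γ pw wh ≤ Vstar ρ u γ wh :=
  le_ciSup (Vw_bddAbove hρpos hρsum hu hγ0 hγ1 wh) pw

lemma Vstar_mem (wh : List (Ahat × Ept)) :
    Vstar ρ u γ wh ∈ Set.Icc (0 : ℝ) (1 - γ)⁻¹ := by
  constructor
  · exact le_trans (Vw_mem hρpos hρsum hu hγ0 hγ1 (fun _ => Classical.arbitrary Ahat) wh).1
      (Vw_le_Vstar hρpos hρsum hu hγ0 hγ1 _ wh)
  · exact ciSup_le fun pw => (Vw_mem hρpos hρsum hu hγ0 hγ1 pw wh).2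

lemma Vw_le_Qstar (pw : List (Ahat × Ept) → Ahat) (wh : List (Ahat × Ept)) :
    Vw ρ u γ pw wh ≤ Qstar ρ u γ wh (pw wh) := by
  rw [Vw_rec hρpos hρsum hu hγ0 hγ1 pw wh, Qstar]
  refine Finset.sum_le_sum fun e _ => ?_
  refine mul_le_mul_of_nonneg_left ?_ (hρpos _ _ e).le
  have := Vw_le_Vstar hρpos hρsum hu hγ0 hγ1 pw (wh ++ [(pw wh, e)])
  nlinarith [hγ0]

lemma Qstar_le_Vstar (wh : List (Ahat × Ept)) (aw : Ahat) :
    Qstar ρ u γ wh aw ≤ Vstar ρ u γ wh := by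
  classical
  refine le_of_forall_pos_le_add fun ε hε => ?_
  have hch : ∀ e : Ept, ∃ pw : List (Ahat × Ept) → Ahat,
      Vstar ρ u γ (wh ++ [(aw, e)]) - ε / 2 < Vw ρ u γ pw (wh ++ [(aw, e)]) := by
    intro e
    apply exists_lt_of_lt_ciSup
    have h0 : (0:ℝ) < ε / 2 := by linarith
    show Vstar ρ u γ (wh ++ [(aw, e)]) - ε / 2 < Vstar ρ u γ (wh ++ [(aw, e)])
    linarith
  choose pwe hpwe using hch
  set g : List (Ahat × Ept) → Ahat := fun wh' =>
    if hp : wh.length < wh'.length ∧ wh <+: wh' then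
      pwe (wh'.get ⟨wh.length, hp.1⟩).2 wh' else aw with hg
  have hgwh : g wh = aw := by
    have hno : ¬(wh.length < wh.length ∧ wh <+: wh) := by simp
    simp only [hg]
    exact dif_neg hno
  have hgext : ∀ (e : Ept) (wh' : List (Ahat × Ept)),
      (wh ++ [(aw, e)]) <+: wh' → g wh' = pwe e wh' := by
    intro e wh' hp
    obtain ⟨t, rfl⟩ := hp
    have hlen : wh.length < ((wh ++ [(aw, e)]) ++ t).length := by simp
    have hpre : wh <+: (wh ++ [(aw, e)]) ++ t :=
      (List.prefix_append wh [(aw, e)]).trans (List.prefix_append _ t)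
    have hget : ∀ hh : wh.length < ((wh ++ [(aw, e)]) ++ t).length,
        ((wh ++ [(aw, e)]) ++ t).get ⟨wh.length, hh⟩ = (aw, e) := by
      intro hh
      simp only [List.get_eq_getElem]
      rw [List.getElem_append_left (by simp), List.getElem_append_right (le_refl wh.length)]
      simp
    simp only [hg]
    rw [dif_pos ⟨hlen, hpre⟩, hget]
  have hVg : Vw ρ u γ g wh = ∑ e, ρ wh aw e *
      (u (wh ++ [(aw, e)]) + γ * Vw ρ u γ (pwe e) (wh ++ [(aw, e)])) := by
    rw [Vw_rec hρpos hρsum hu hγ0 hγ1 g wh, hgwh]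
    refine Finset.sum_congr rfl fun e _ => ?_
    rw [Vw_congr (wh ++ [(aw, e)]) (fun wh' hp => hgext e wh' hp)]
  calc Qstar ρ u γ wh aw
      = ∑ e, ρ wh aw e * (u (wh ++ [(aw, e)]) + γ * Vstar ρ u γ (wh ++ [(aw, e)])) := rfl
    _ ≤ ∑ e, ρ wh aw e *
        (u (wh ++ [(aw, e)]) + γ * (Vw ρ u γ (pwe e) (wh ++ [(aw, e)]) + ε / 2)) := by
        refine Finset.sum_le_sum fun e _ => ?_
        refine mul_le_mul_of_nonneg_left ?_ (hρpos _ _ e).le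
        have := hpwe e
        nlinarith [hγ0]
    _ = (∑ e, ρ wh aw e *
          (u (wh ++ [(aw, e)]) + γ * Vw ρ u γ (pwe e) (wh ++ [(aw, e)])))
        + γ * (ε / 2) := by
        have hterm : ∀ e : Ept, ρ wh aw e *
            (u (wh ++ [(aw, e)]) + γ * (Vw ρ u γ (pwe e) (wh ++ [(aw, e)]) + ε / 2)) =
            ρ wh aw e * (u (wh ++ [(aw, e)]) + γ * Vw ρ u γ (pwe e) (wh ++ [(aw, e)]))
              + ρ wh aw e * (γ * (ε / 2)) := fun e => by ring
        rw [Finset.sum_congr rfl fun e _ => hterm e, Finset.sum_add_distrib,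
          ← Finset.sum_mul, hρsum wh aw, one_mul]
    _ = Vw ρ u γ g wh + γ * (ε / 2) := by rw [hVg]
    _ ≤ Vstar ρ u γ wh + ε := by
        have h1 := Vw_le_Vstar hρpos hρsum hu hγ0 hγ1 g wh
        nlinarith [hγ0, hγ1, hε]

end Star


lemma contraction_le_zero {ι' : Type*} [Nonempty ι'] {f : ι' → ℝ} {γ B : ℝ}
    (hγ0 : 0 < γ) (hγ1 : γ < 1) (hb : ∀ i, f i ≤ B)
    (h : ∀ i, ∃ w : Ept → ℝ, ∃ g : Ept → ι',
      (∀ e, 0 ≤ w e) ∧ (∑ e, w e = 1) ∧ f i ≤ γ * ∑ e, w e * f (g e)) :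
    ∀ i, f i ≤ 0 := by
  have hbdd : BddAbove (Set.range f) := ⟨B, by rintro x ⟨i, rfl⟩; exact hb i⟩
  have hstep : ∀ i, f i ≤ γ * ⨆ j, f j := by
    intro i
    obtain ⟨w, g, hw0, hw1, hle⟩ := h i
    refine hle.trans (mul_le_mul_of_nonneg_left ?_ hγ0.le)
    calc ∑ e, w e * f (g e) ≤ ∑ e, w e * ⨆ j, f j :=
          Finset.sum_le_sum fun e _ =>
            mul_le_mul_of_nonneg_left (le_ciSup hbdd (g e)) (hw0 e)
      _ = ⨆ j, f j := by rw [← Finset.sum_mul, hw1, one_mul]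
  have h1 : (⨆ j, f j) ≤ γ * ⨆ j, f j := ciSup_le hstep
  have h2 : (⨆ j, f j) ≤ 0 := by nlinarith
  exact fun i => (le_ciSup hbdd i).trans h2

end Aux

/-- **Existence of an optimal, modification-independent, non-modifying
policy for the realistic value functions.** -/
theorem exists_optimal_nonmodifying_policy
    {Ahat P Ept : Type*} [Fintype Ahat] [Nonempty Ahat] [Fintype Ept] [Nonempty Ept]
    (ι : P → Policy Ahat P Ept)
    (hname : ∀ pw : List (Ahat × Ept) → Ahat,
      ∃ p : P, ι p = fun h : Hist Ahat P Ept => (pw (hworld h), p))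
    (ρ : List (Ahat × Ept) → Ahat → Ept → ℝ)
    (hρpos : ∀ wh (aw : Ahat) (e : Ept), 0 < ρ wh aw e)
    (hρsum : ∀ wh (aw : Ahat), ∑ e, ρ wh aw e = 1)
    (u : List (Ahat × Ept) → ℝ)
    (hu : ∀ wh, u wh ∈ Set.Icc (0 : ℝ) 1)
    (γ : ℝ) (hγ0 : 0 < γ) (hγ1 : γ < 1) :
    ∃ πs : Policy Ahat P Ept,
      ModIndep πs ∧
      (∀ h : Hist Ahat P Ept, ι (πs h).2 = πs) ∧
      (∀ h : Hist Ahat P Ept,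
        Vre ι ρ u γ πs h = ⨆ π : Policy Ahat P Ept, Vre ι ρ u γ π h) := by
  classical
  -- the argmax world policy
  have hmax : ∀ wh : List (Ahat × Ept), ∃ aw : Ahat, ∀ aw' : Ahat,
      Qstar ρ u γ wh aw' ≤ Qstar ρ u γ wh aw := fun wh =>
    Finite.exists_max fun aw => Qstar ρ u γ wh aw
  choose pws hpws using hmax
  obtain ⟨ps, hps⟩ := hname pws
  haveI : Nonempty P := ⟨ps⟩
  -- Vstar is the Q-value of the argmax action
  have hVQ : ∀ wh, Vstar ρ u γ wh = Qstar ρ u γ wh (pws wh) := by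
    intro wh
    refine le_antisymm (ciSup_le fun pw => ?_)
      (Qstar_le_Vstar hρpos hρsum hu hγ0 hγ1 wh (pws wh))
    exact (Vw_le_Qstar hρpos hρsum hu hγ0 hγ1 pw wh).trans (hpws wh (pw wh))
  -- the argmax world policy achieves Vstar
  have hVwVs : ∀ wh, Vw ρ u γ pws wh = Vstar ρ u γ wh := by
    have hf : ∀ wh, Vstar ρ u γ wh - Vw ρ u γ pws wh ≤ 0 := by
      refine contraction_le_zero (Ept := Ept) (B := (1 - γ)⁻¹) hγ0 hγ1 (fun wh => ?_) (fun wh => ?_)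
      · have h1 := (Vstar_mem hρpos hρsum hu hγ0 hγ1 wh).2
        have h2 := (Vw_mem hρpos hρsum hu hγ0 hγ1 pws wh).1
        linarith
      · refine ⟨ρ wh (pws wh), fun e => wh ++ [(pws wh, e)],
          fun e => (hρpos _ _ e).le, hρsum _ _, le_of_eq ?_⟩
        rw [hVQ wh, Vw_rec hρpos hρsum hu hγ0 hγ1 pws wh, Qstar,
          ← Finset.sum_sub_distrib, Finset.mul_sum]
        exact Finset.sum_congr rfl fun e _ => by ring
    intro wh
    have h1 := hf wh
    have h2 := Vw_le_Vstar hρpos hρsum hu hγ0 hγ1 pws wh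
    linarith
  -- lifted policy realizes the world-policy values
  have hlift : ∀ (n : ℕ) (h : Hist Ahat P Ept),
      EUre ι ρ u h (pws (hworld h), ps) n = Wlift ρ u pws n (hworld h) := by
    intro n
    induction n with
    | zero => intro h; simp [EUre, Wlift]
    | succ n ih =>
      intro h
      simp only [EUre, Wlift]
      refine Finset.sum_congr rfl fun e _ => ?_
      have hhw : hworld (h ++ [((pws (hworld h), ps), e)])
          = hworld h ++ [(pws (hworld h), e)] := by simp [hworld]
      have hι : ι (pws (hworld h), ps).2 (h ++ [((pws (hworld h), ps), e)]) =
          (pws (hworld (h ++ [((pws (hworld h), ps), e)])), ps) := by rw [hps]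
      rw [hι, ih (h ++ [((pws (hworld h), ps), e)]), hhw]
  have hVre : ∀ h : Hist Ahat P Ept,
      Vre ι ρ u γ (ι ps) h = Vstar ρ u γ (hworld h) := by
    intro h
    have h1 : ι ps h = (pws (hworld h), ps) := by rw [hps]
    show Qre ι ρ u γ h (ι ps h) = _
    rw [h1]
    have h2 : Qre ι ρ u γ h (pws (hworld h), ps) = Vw ρ u γ pws (hworld h) :=
      tsum_congr fun n => by rw [hlift n h]
    rw [h2, hVwVs]
  -- no policy beats Vstar
  have hQstar_nonneg : ∀ wh aw, 0 ≤ Qstar ρ u γ wh aw := by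
    intro wh aw
    refine Finset.sum_nonneg fun e _ => mul_nonneg (hρpos _ _ e).le ?_
    have h1 := (hu (wh ++ [(aw, e)])).1
    have h2 := (Vstar_mem hρpos hρsum hu hγ0 hγ1 (wh ++ [(aw, e)])).1
    nlinarith
  have hQle : ∀ (h : Hist Ahat P Ept) (a : Act Ahat P),
      Qre ι ρ u γ h a ≤ Vstar ρ u γ (hworld h) := by
    have hf : ∀ x : Hist Ahat P Ept × Act Ahat P,
        Qre ι ρ u γ x.1 x.2 - Qstar ρ u γ (hworld x.1) x.2.1 ≤ 0 := by
      refine contraction_le_zero (Ept := Ept) (B := (1 - γ)⁻¹) hγ0 hγ1 (fun x => ?_) ?_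
      · have h1 := (Qre_mem hρpos hρsum hu hγ0 hγ1 ι x.1 x.2).2
        have h2 := hQstar_nonneg (hworld x.1) x.2.1
        linarith
      · rintro ⟨h, a⟩
        refine ⟨ρ (hworld h) a.1, fun e => (h ++ [(a, e)], ι a.2 (h ++ [(a, e)])),
          fun e => (hρpos _ _ e).le, hρsum _ _, ?_⟩
        have heq : Qre ι ρ u γ (h, a).1 (h, a).2 - Qstar ρ u γ (hworld (h, a).1) (h, a).2.1
            = γ * ∑ e, ρ (hworld h) a.1 e *
              (Qre ι ρ u γ (h ++ [(a, e)]) (ι a.2 (h ++ [(a, e)]))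
                - Vstar ρ u γ (hworld h ++ [(a.1, e)])) := by
          dsimp only
          rw [Qre_rec hρpos hρsum hu hγ0 hγ1 ι h a, Qstar,
            ← Finset.sum_sub_distrib, Finset.mul_sum]
          exact Finset.sum_congr rfl fun e _ => by ring
        rw [heq]
        refine mul_le_mul_of_nonneg_left (Finset.sum_le_sum fun e _ => ?_) hγ0.le
        refine mul_le_mul_of_nonneg_left ?_ (hρpos _ _ e).le
        have hhw : hworld (h ++ [(a, e)]) = hworld h ++ [(a.1, e)] := by simp [hworld]
        have h2 := Qstar_le_Vstar hρpos hρsum hu hγ0 hγ1 (hworld h ++ [(a.1, e)])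
          (ι a.2 (h ++ [(a, e)])).1
        dsimp only
        rw [hhw]
        linarith
    intro h a
    have h1 := hf (h, a)
    have h2 := Qstar_le_Vstar hρpos hρsum hu hγ0 hγ1 (hworld h) a.1
    dsimp only at h1
    linarith
  -- assemble
  refine ⟨ι ps, ?_, ?_, ?_⟩
  · intro h h' hw
    simp only [hps]
    rw [hw]
  · intro h
    have h1 : ι ps h = (pws (hworld h), ps) := by rw [hps]
    rw [h1]
  · intro h
    haveI : Nonempty (Policy Ahat P Ept) := ⟨fun _ => (Classical.arbitrary Ahat, ps)⟩
    refine le_antisymm ?_ (ciSup_le fun π => ?_)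
    · refine le_ciSup (f := fun π : Policy Ahat P Ept => Vre ι ρ u γ π h) ⟨(1 - γ)⁻¹, ?_⟩ (ι ps)
      rintro y ⟨π, rfl⟩
      exact (Qre_mem hρpos hρsum hu hγ0 hγ1 ι h (π h)).2
    · rw [hVre h]
      exact hQle h (π h)

end Stmt9
end
end

section
/- For any policy-self-modification model (Â, E, P, ι) with modification-independent belief ρ and modification-independent utility function u, there exist an extended name set P' ⊇ P and an extended naming map ι' ⊇ ι such that some policy π* for the extended model (Â, E, P', ι') is optimal with respect to the realistic value function, has a name p* ∈ P' with ι'(p*) = π*, and can be taken to be modification-independent and non-modifying (it always selects its own name p*). -/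
/-!
STATEMENT 10 (Everitt et al., Theorem "Optimal policy name").

Policy self-modification model `(Ahat, Ept, P, ι)`: world actions `Ahat`
(finite), percepts `Ept` (finite), names `P`, naming map `ι : P → Policy`.
The belief `ρ` and the utility function `u` are modification-independent
(enforced by their types).  The realistic value functions `Qre`/`Vre` give the
expected discounted `u`-utility where future actions are chosen by the
policies named by the preceding actions.

Claim: there exist an extended name set `P'` (given by an embedding
`j : P ↪ P'`) and an extended naming map `ι' : P' → Policy` extending `ι`
(i.e. on old names and histories built from old names, `ι'` agrees with `ι`
modulo the embedding), and a policy `π*` for the extended model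
`(Ahat, Ept, P', ι')` such that `π*` has a name `p*` (`ι' p* = π*`), `π*` is
non-modifying (it always selects its own name `p*`), modification-independent,
and optimal with respect to the realistic value function of the extended
model.
-/

noncomputable section

namespace Stmt10

/-- Actions: a world action together with the name of the policy selected for
the next step. -/
abbrev Act (Ahat P : Type*) : Type _ := Ahat × P

/-- Histories: finite sequences of action–percept pairs. -/
abbrev Hist (Ahat P Ept : Type*) : Type _ := List (Act Ahat P × Ept)

/-- Policies: maps from histories to actions. -/
abbrev Policy (Ahat P Ept : Type*) : Type _ := Hist Ahat P Ept → Act Ahat P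

/-- The world part of a history (policy-name components deleted). -/
def hworld {Ahat P Ept : Type*} (h : Hist Ahat P Ept) : List (Ahat × Ept) :=
  h.map fun pe => (pe.1.1, pe.2)

/-- A function on histories is modification-independent if its value depends
only on the world part of its argument. -/
def ModIndep {Ahat P Ept α : Type*} (f : Hist Ahat P Ept → α) : Prop :=
  ∀ h h' : Hist Ahat P Ept, hworld h = hworld h' → f h = f h'


/-- `EUre ι ρ u h a n`: expected `u`-utility received `n` steps after taking
action `a` following history `h`, with percepts sampled from `ρ` and every
future action taken by the policy selected by the preceding action (the
realistic measure `ρ_re`). -/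
def EUre {Ahat P Ept : Type*} [Fintype Ept] (ι : P → Policy Ahat P Ept)
    (ρ : List (Ahat × Ept) → Ahat → Ept → ℝ) (u : List (Ahat × Ept) → ℝ) :
    Hist Ahat P Ept → Act Ahat P → ℕ → ℝ
  | h, a, 0 => ∑ e, ρ (hworld h) a.1 e * u (hworld h ++ [(a.1, e)])
  | h, a, n + 1 =>
      ∑ e, ρ (hworld h) a.1 e *
        EUre ι ρ u (h ++ [(a, e)]) (ι a.2 (h ++ [(a, e)])) n

/-- The realistic `Q`-value: expected discounted `u`-utility when all future
actions are chosen by the policies selected through self-modification. -/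
def Qre {Ahat P Ept : Type*} [Fintype Ept] (ι : P → Policy Ahat P Ept)
    (ρ : List (Ahat × Ept) → Ahat → Ept → ℝ) (u : List (Ahat × Ept) → ℝ)
    (γ : ℝ) (h : Hist Ahat P Ept) (a : Act Ahat P) : ℝ :=
  ∑' n : ℕ, γ ^ n * EUre ι ρ u h a n

/-- The realistic `V`-value of a policy `π` (a policy argument beyond the next
action is superfluous, since the action determines the next policy). -/
def Vre {Ahat P Ept : Type*} [Fintype Ept] (ι : P → Policy Ahat P Ept)
    (ρ : List (Ahat × Ept) → Ahat → Ept → ℝ) (u : List (Ahat × Ept) → ℝ)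
    (γ : ℝ) (π : Policy Ahat P Ept) (h : Hist Ahat P Ept) : ℝ :=
  Qre ι ρ u γ h (π h)

/-- Transport of actions along a renaming of policy names. -/
def mapAct {Ahat P P' : Type*} (j : P → P') (a : Act Ahat P) : Act Ahat P' :=
  (a.1, j a.2)

/-- Transport of histories along a renaming of policy names. -/
def mapHist {Ahat P P' Ept : Type*} (j : P → P') (h : Hist Ahat P Ept) :
    Hist Ahat P' Ept :=
  h.map fun pe => (mapAct j pe.1, pe.2)

section Aux
set_option linter.unusedSectionVars false

variable {Ahat P₀ Ept : Type*} [Fintype Ept]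
variable {ι₀ : P₀ → Policy Ahat P₀ Ept}
variable {ρ : List (Ahat × Ept) → Ahat → Ept → ℝ}
variable {u : List (Ahat × Ept) → ℝ} {γ : ℝ}

lemma hworld_append (h : Hist Ahat P₀ Ept) (a : Act Ahat P₀) (e : Ept) :
    hworld (h ++ [(a, e)]) = hworld h ++ [(a.1, e)] := by
  simp [hworld]

variable (hρpos : ∀ wh (aw : Ahat) (e : Ept), 0 < ρ wh aw e)
variable (hρsum : ∀ wh (aw : Ahat), ∑ e, ρ wh aw e = 1)
variable (hu : ∀ wh, u wh ∈ Set.Icc (0 : ℝ) 1)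

include hρpos hρsum hu in
lemma EUre_mem :
    ∀ (n : ℕ) (h : Hist Ahat P₀ Ept) (a : Act Ahat P₀),
      EUre ι₀ ρ u h a n ∈ Set.Icc (0 : ℝ) 1 := by
  intro n
  induction n with
  | zero =>
    intro h a
    constructor
    · apply Finset.sum_nonneg
      intro e _
      exact mul_nonneg (hρpos _ _ _).le (hu _).1
    · calc ∑ e, ρ (hworld h) a.1 e * u (hworld h ++ [(a.1, e)])
          ≤ ∑ e, ρ (hworld h) a.1 e * 1 := by
            apply Finset.sum_le_sum
            intro e _
            exact mul_le_mul_of_nonneg_left (hu _).2 (hρpos _ _ _).le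
      _ = 1 := by simpa using hρsum (hworld h) a.1
  | succ n ih =>
    intro h a
    constructor
    · apply Finset.sum_nonneg
      intro e _
      exact mul_nonneg (hρpos _ _ _).le (ih _ _).1
    · calc ∑ e, ρ (hworld h) a.1 e *
            EUre ι₀ ρ u (h ++ [(a, e)]) (ι₀ a.2 (h ++ [(a, e)])) n
          ≤ ∑ e, ρ (hworld h) a.1 e * 1 := by
            apply Finset.sum_le_sum
            intro e _
            exact mul_le_mul_of_nonneg_left (ih _ _).2 (hρpos _ _ _).le
      _ = 1 := by simpa using hρsum (hworld h) a.1

variable (hγ0 : 0 < γ) (hγ1 : γ < 1)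

include hρpos hρsum hu hγ0 hγ1 in
lemma summable_EUre (h : Hist Ahat P₀ Ept) (a : Act Ahat P₀) :
    Summable (fun n : ℕ => γ ^ n * EUre ι₀ ρ u h a n) := by
  apply Summable.of_nonneg_of_le
    (fun n => mul_nonneg (pow_nonneg hγ0.le n) (EUre_mem hρpos hρsum hu n h a).1)
    (fun n => ?_) (summable_geometric_of_lt_one hγ0.le hγ1)
  calc γ ^ n * EUre ι₀ ρ u h a n ≤ γ ^ n * 1 :=
        mul_le_mul_of_nonneg_left (EUre_mem hρpos hρsum hu n h a).2 (pow_nonneg hγ0.le n)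
    _ = γ ^ n := mul_one _

include hρpos hρsum hu hγ0 hγ1 in
lemma Qre_nonneg (h : Hist Ahat P₀ Ept) (a : Act Ahat P₀) :
    0 ≤ Qre ι₀ ρ u γ h a :=
  tsum_nonneg fun n => mul_nonneg (pow_nonneg hγ0.le n) (EUre_mem hρpos hρsum hu n h a).1

include hρpos hρsum hu hγ0 hγ1 in
lemma Qre_le (h : Hist Ahat P₀ Ept) (a : Act Ahat P₀) :
    Qre ι₀ ρ u γ h a ≤ (1 - γ)⁻¹ := by
  rw [← tsum_geometric_of_lt_one hγ0.le hγ1]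
  apply Summable.tsum_le_tsum _ (summable_EUre hρpos hρsum hu hγ0 hγ1 h a)
    (summable_geometric_of_lt_one hγ0.le hγ1)
  intro n
  calc γ ^ n * EUre ι₀ ρ u h a n ≤ γ ^ n * 1 :=
        mul_le_mul_of_nonneg_left (EUre_mem hρpos hρsum hu n h a).2 (pow_nonneg hγ0.le n)
    _ = γ ^ n := mul_one _

include hρpos hρsum hu hγ0 hγ1 in
lemma Qre_rec (h : Hist Ahat P₀ Ept) (a : Act Ahat P₀) :
    Qre ι₀ ρ u γ h a =
      ∑ e, ρ (hworld h) a.1 e *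
        (u (hworld h ++ [(a.1, e)]) +
          γ * Qre ι₀ ρ u γ (h ++ [(a, e)]) (ι₀ a.2 (h ++ [(a, e)]))) := by
  have hs := summable_EUre (ι₀ := ι₀) hρpos hρsum hu hγ0 hγ1 h a
  rw [Qre, Summable.tsum_eq_zero_add hs]
  have h1 : ∑' (n : ℕ), γ ^ (n + 1) * EUre ι₀ ρ u h a (n + 1) =
      ∑ e, ρ (hworld h) a.1 e *
        (γ * Qre ι₀ ρ u γ (h ++ [(a, e)]) (ι₀ a.2 (h ++ [(a, e)]))) := by
    have : ∀ n : ℕ, γ ^ (n + 1) * EUre ι₀ ρ u h a (n + 1) =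
        ∑ e, ρ (hworld h) a.1 e *
          (γ * (γ ^ n * EUre ι₀ ρ u (h ++ [(a, e)]) (ι₀ a.2 (h ++ [(a, e)])) n)) := by
      intro n
      rw [show EUre ι₀ ρ u h a (n+1) = ∑ e, ρ (hworld h) a.1 e *
        EUre ι₀ ρ u (h ++ [(a, e)]) (ι₀ a.2 (h ++ [(a, e)])) n from rfl,
        Finset.mul_sum]
      congr 1
      ext e
      ring
    rw [tsum_congr this, Summable.tsum_finsetSum]
    · congr 1
      ext e
      rw [tsum_mul_left, tsum_mul_left, Qre]
    · intro e _
      apply Summable.mul_left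
      apply Summable.mul_left
      exact summable_EUre hρpos hρsum hu hγ0 hγ1 _ _
  rw [h1, pow_zero, one_mul,
    show EUre ι₀ ρ u h a 0 = ∑ e, ρ (hworld h) a.1 e * u (hworld h ++ [(a.1, e)]) from rfl,
    ← Finset.sum_add_distrib]
  congr 1
  ext e
  ring

end Aux
section Bellman

variable {Ahat Ept : Type*} [Fintype Ahat] [Nonempty Ahat] [Fintype Ept]

local instance listTop : TopologicalSpace (List (Ahat × Ept)) := ⊥
local instance listDisc : DiscreteTopology (List (Ahat × Ept)) := ⟨rfl⟩

lemma abs_sup'_sub_sup'_le {ι : Type*} {s : Finset ι} (hs : s.Nonempty)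
    (F G : ι → ℝ) (c : ℝ) (hc : ∀ i ∈ s, |F i - G i| ≤ c) :
    |s.sup' hs F - s.sup' hs G| ≤ c := by
  rw [abs_sub_le_iff]
  constructor
  · rw [sub_le_iff_le_add]
    apply Finset.sup'_le
    intro i hi
    calc F i ≤ G i + c := by
          have := (abs_sub_le_iff.mp (hc i hi)).1; linarith
      _ ≤ c + s.sup' hs G := by
          have := Finset.le_sup' G hi; linarith
  · rw [sub_le_iff_le_add]
    apply Finset.sup'_le
    intro i hi
    calc G i ≤ F i + c := by
          have := (abs_sub_le_iff.mp (hc i hi)).2; linarith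
      _ ≤ c + s.sup' hs F := by
          have := Finset.le_sup' F hi; linarith

variable (ρ : List (Ahat × Ept) → Ahat → Ept → ℝ)
variable (u : List (Ahat × Ept) → ℝ) (γ : ℝ)

/-- The Bellman operator on bounded functions on world histories. -/
def TBel (hρpos : ∀ wh (aw : Ahat) (e : Ept), 0 < ρ wh aw e)
    (hρsum : ∀ wh (aw : Ahat), ∑ e, ρ wh aw e = 1)
    (hu : ∀ wh, u wh ∈ Set.Icc (0 : ℝ) 1) (hγ0 : 0 < γ)
    (V : BoundedContinuousFunction (List (Ahat × Ept)) ℝ) :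
    BoundedContinuousFunction (List (Ahat × Ept)) ℝ :=
  BoundedContinuousFunction.ofNormedAddCommGroup
    (fun wh => Finset.univ.sup' Finset.univ_nonempty
      (fun b : Ahat => ∑ e, ρ wh b e * (u (wh ++ [(b, e)]) + γ * V (wh ++ [(b, e)]))))
    continuous_of_discreteTopology (1 + γ * ‖V‖) (by
      intro wh
      rw [Real.norm_eq_abs, abs_le]
      have key : ∀ b : Ahat,
          |∑ e, ρ wh b e * (u (wh ++ [(b, e)]) + γ * V (wh ++ [(b, e)]))| ≤ 1 + γ * ‖V‖ := by
        intro b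
        calc |∑ e, ρ wh b e * (u (wh ++ [(b, e)]) + γ * V (wh ++ [(b, e)]))|
            ≤ ∑ e, |ρ wh b e * (u (wh ++ [(b, e)]) + γ * V (wh ++ [(b, e)]))| :=
              Finset.abs_sum_le_sum_abs _ _
          _ ≤ ∑ e, ρ wh b e * (1 + γ * ‖V‖) := by
              apply Finset.sum_le_sum
              intro e _
              rw [abs_mul, abs_of_pos (hρpos wh b e)]
              apply mul_le_mul_of_nonneg_left _ (hρpos wh b e).le
              calc |u (wh ++ [(b, e)]) + γ * V (wh ++ [(b, e)])|
                  ≤ |u (wh ++ [(b, e)])| + |γ * V (wh ++ [(b, e)])| := abs_add_le _ _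
                _ ≤ 1 + γ * ‖V‖ := by
                    apply add_le_add
                    · rw [abs_le]; have := hu (wh ++ [(b, e)])
                      exact ⟨by linarith [this.1], this.2⟩
                    · rw [abs_mul, abs_of_pos hγ0]
                      exact mul_le_mul_of_nonneg_left
                        (V.norm_coe_le_norm _) hγ0.le
          _ = 1 + γ * ‖V‖ := by rw [← Finset.sum_mul, hρsum wh b, one_mul]
      constructor
      · obtain ⟨b⟩ := ‹Nonempty Ahat›
        calc -(1 + γ * ‖V‖)
            ≤ ∑ e, ρ wh b e * (u (wh ++ [(b, e)]) + γ * V (wh ++ [(b, e)])) :=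
              neg_le_of_abs_le (key b)
          _ ≤ _ := by
              exact Finset.le_sup' (fun b : Ahat => ∑ e, ρ wh b e *
                (u (wh ++ [(b, e)]) + γ * V (wh ++ [(b, e)]))) (Finset.mem_univ b)
      · exact Finset.sup'_le _ _ fun b _ => le_of_abs_le (key b))

lemma TBel_contract (hρpos : ∀ wh (aw : Ahat) (e : Ept), 0 < ρ wh aw e)
    (hρsum : ∀ wh (aw : Ahat), ∑ e, ρ wh aw e = 1)
    (hu : ∀ wh, u wh ∈ Set.Icc (0 : ℝ) 1) (hγ0 : 0 < γ) (hγ1 : γ < 1) :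
    ContractingWith γ.toNNReal (TBel ρ u γ hρpos hρsum hu hγ0) := by
  constructor
  · exact_mod_cast Real.toNNReal_lt_one.mpr hγ1
  · apply LipschitzWith.of_dist_le_mul
    intro V W
    rw [Real.coe_toNNReal _ hγ0.le]
    rw [BoundedContinuousFunction.dist_le (by positivity)]
    intro wh
    rw [Real.dist_eq]
    show |Finset.univ.sup' Finset.univ_nonempty
        (fun b : Ahat => ∑ e, ρ wh b e * (u (wh ++ [(b, e)]) + γ * V (wh ++ [(b, e)]))) -
      Finset.univ.sup' Finset.univ_nonempty
        (fun b : Ahat => ∑ e, ρ wh b e * (u (wh ++ [(b, e)]) + γ * W (wh ++ [(b, e)])))| ≤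
      γ * dist V W
    apply abs_sup'_sub_sup'_le
    intro b _
    rw [← Finset.sum_sub_distrib]
    calc |∑ e, (ρ wh b e * (u (wh ++ [(b, e)]) + γ * V (wh ++ [(b, e)])) -
            ρ wh b e * (u (wh ++ [(b, e)]) + γ * W (wh ++ [(b, e)])))|
        ≤ ∑ e, |ρ wh b e * (u (wh ++ [(b, e)]) + γ * V (wh ++ [(b, e)])) -
            ρ wh b e * (u (wh ++ [(b, e)]) + γ * W (wh ++ [(b, e)]))| :=
          Finset.abs_sum_le_sum_abs _ _
      _ ≤ ∑ e, ρ wh b e * (γ * dist V W) := by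
          apply Finset.sum_le_sum
          intro e _
          have : ρ wh b e * (u (wh ++ [(b, e)]) + γ * V (wh ++ [(b, e)])) -
              ρ wh b e * (u (wh ++ [(b, e)]) + γ * W (wh ++ [(b, e)])) =
              ρ wh b e * (γ * (V (wh ++ [(b, e)]) - W (wh ++ [(b, e)]))) := by ring
          rw [this, abs_mul, abs_mul, abs_of_pos (hρpos wh b e), abs_of_pos hγ0]
          apply mul_le_mul_of_nonneg_left _ (hρpos wh b e).le
          apply mul_le_mul_of_nonneg_left _ hγ0.le
          rw [← Real.dist_eq]
          exact BoundedContinuousFunction.dist_coe_le_dist _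
      _ = γ * dist V W := by rw [← Finset.sum_mul, hρsum wh b, one_mul]

/-- The optimal value function on world histories. -/
def VstarB (hρpos : ∀ wh (aw : Ahat) (e : Ept), 0 < ρ wh aw e)
    (hρsum : ∀ wh (aw : Ahat), ∑ e, ρ wh aw e = 1)
    (hu : ∀ wh, u wh ∈ Set.Icc (0 : ℝ) 1) (hγ0 : 0 < γ) (hγ1 : γ < 1) :
    BoundedContinuousFunction (List (Ahat × Ept)) ℝ :=
  ContractingWith.fixedPoint _ (TBel_contract ρ u γ hρpos hρsum hu hγ0 hγ1)

def Vstar (hρpos : ∀ wh (aw : Ahat) (e : Ept), 0 < ρ wh aw e)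
    (hρsum : ∀ wh (aw : Ahat), ∑ e, ρ wh aw e = 1)
    (hu : ∀ wh, u wh ∈ Set.Icc (0 : ℝ) 1) (hγ0 : 0 < γ) (hγ1 : γ < 1) :
    List (Ahat × Ept) → ℝ :=
  fun wh => VstarB ρ u γ hρpos hρsum hu hγ0 hγ1 wh

/-- The optimal state-action value function. -/
def Qstar (hρpos : ∀ wh (aw : Ahat) (e : Ept), 0 < ρ wh aw e)
    (hρsum : ∀ wh (aw : Ahat), ∑ e, ρ wh aw e = 1)
    (hu : ∀ wh, u wh ∈ Set.Icc (0 : ℝ) 1) (hγ0 : 0 < γ) (hγ1 : γ < 1) :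
    List (Ahat × Ept) → Ahat → ℝ :=
  fun wh b => ∑ e, ρ wh b e *
    (u (wh ++ [(b, e)]) + γ * Vstar ρ u γ hρpos hρsum hu hγ0 hγ1 (wh ++ [(b, e)]))

lemma Vstar_eq_sup' (hρpos : ∀ wh (aw : Ahat) (e : Ept), 0 < ρ wh aw e)
    (hρsum : ∀ wh (aw : Ahat), ∑ e, ρ wh aw e = 1)
    (hu : ∀ wh, u wh ∈ Set.Icc (0 : ℝ) 1) (hγ0 : 0 < γ) (hγ1 : γ < 1) (wh) :
    Vstar ρ u γ hρpos hρsum hu hγ0 hγ1 wh =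
      Finset.univ.sup' Finset.univ_nonempty
        (fun b : Ahat => Qstar ρ u γ hρpos hρsum hu hγ0 hγ1 wh b) := by
  have hfix := (TBel_contract ρ u γ hρpos hρsum hu hγ0 hγ1).fixedPoint_isFixedPt
  have : TBel ρ u γ hρpos hρsum hu hγ0 (VstarB ρ u γ hρpos hρsum hu hγ0 hγ1) =
      VstarB ρ u γ hρpos hρsum hu hγ0 hγ1 := hfix
  conv_lhs => rw [Vstar, ← this]
  rfl

lemma Qstar_le_Vstar (hρpos : ∀ wh (aw : Ahat) (e : Ept), 0 < ρ wh aw e)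
    (hρsum : ∀ wh (aw : Ahat), ∑ e, ρ wh aw e = 1)
    (hu : ∀ wh, u wh ∈ Set.Icc (0 : ℝ) 1) (hγ0 : 0 < γ) (hγ1 : γ < 1) (wh) (b : Ahat) :
    Qstar ρ u γ hρpos hρsum hu hγ0 hγ1 wh b ≤ Vstar ρ u γ hρpos hρsum hu hγ0 hγ1 wh := by
  rw [Vstar_eq_sup']
  exact Finset.le_sup' _ (Finset.mem_univ b)

/-- A greedy world-action selector. -/
def fg (hρpos : ∀ wh (aw : Ahat) (e : Ept), 0 < ρ wh aw e)
    (hρsum : ∀ wh (aw : Ahat), ∑ e, ρ wh aw e = 1)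
    (hu : ∀ wh, u wh ∈ Set.Icc (0 : ℝ) 1) (hγ0 : 0 < γ) (hγ1 : γ < 1) :
    List (Ahat × Ept) → Ahat :=
  fun wh => (Finset.exists_mem_eq_sup' Finset.univ_nonempty
    (fun b : Ahat => Qstar ρ u γ hρpos hρsum hu hγ0 hγ1 wh b)).choose

lemma Vstar_eq_Qstar_fg (hρpos : ∀ wh (aw : Ahat) (e : Ept), 0 < ρ wh aw e)
    (hρsum : ∀ wh (aw : Ahat), ∑ e, ρ wh aw e = 1)
    (hu : ∀ wh, u wh ∈ Set.Icc (0 : ℝ) 1) (hγ0 : 0 < γ) (hγ1 : γ < 1) (wh) :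
    Vstar ρ u γ hρpos hρsum hu hγ0 hγ1 wh =
      Qstar ρ u γ hρpos hρsum hu hγ0 hγ1 wh (fg ρ u γ hρpos hρsum hu hγ0 hγ1 wh) := by
  rw [Vstar_eq_sup']
  exact (Finset.exists_mem_eq_sup' Finset.univ_nonempty
    (fun b : Ahat => Qstar ρ u γ hρpos hρsum hu hγ0 hγ1 wh b)).choose_spec.2

lemma Vstar_bound (hρpos : ∀ wh (aw : Ahat) (e : Ept), 0 < ρ wh aw e)
    (hρsum : ∀ wh (aw : Ahat), ∑ e, ρ wh aw e = 1)
    (hu : ∀ wh, u wh ∈ Set.Icc (0 : ℝ) 1) (hγ0 : 0 < γ) (hγ1 : γ < 1) :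
    ∃ C : ℝ, 0 ≤ C ∧ ∀ wh, |Vstar ρ u γ hρpos hρsum hu hγ0 hγ1 wh| ≤ C := by
  refine ⟨‖VstarB ρ u γ hρpos hρsum hu hγ0 hγ1‖, norm_nonneg _, fun wh => ?_⟩
  exact (VstarB ρ u γ hρpos hρsum hu hγ0 hγ1).norm_coe_le_norm wh

end Bellman
universe u

/-- **An optimal non-modifying policy can be given a name by extending the
name set.** -/
theorem optimal_policy_name
    {Ahat Ept : Type*} [Fintype Ahat] [Nonempty Ahat] [Fintype Ept] [Nonempty Ept]
    (P : Type u) (ι : P → Policy Ahat P Ept)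
    (ρ : List (Ahat × Ept) → Ahat → Ept → ℝ)
    (hρpos : ∀ wh (aw : Ahat) (e : Ept), 0 < ρ wh aw e)
    (hρsum : ∀ wh (aw : Ahat), ∑ e, ρ wh aw e = 1)
    (u : List (Ahat × Ept) → ℝ)
    (hu : ∀ wh, u wh ∈ Set.Icc (0 : ℝ) 1)
    (γ : ℝ) (hγ0 : 0 < γ) (hγ1 : γ < 1) :
    ∃ (P' : Type u) (j : P ↪ P') (ι' : P' → Policy Ahat P' Ept),
      (∀ (p : P) (h : Hist Ahat P Ept),
        ι' (j p) (mapHist j h) = mapAct j (ι p h)) ∧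
      ∃ (ps : P') (πs : Policy Ahat P' Ept),
        ι' ps = πs ∧
        (∀ h : Hist Ahat P' Ept, (πs h).2 = ps) ∧
        ModIndep πs ∧
        (∀ h : Hist Ahat P' Ept,
          Vre ι' ρ u γ πs h = ⨆ π : Policy Ahat P' Ept, Vre ι' ρ u γ π h) := by
  classical
  obtain ⟨Cv, hCv0, hCv⟩ := Vstar_bound ρ u γ hρpos hρsum hu hγ0 hγ1
  set F : List (Ahat × Ept) → Ahat := fg ρ u γ hρpos hρsum hu hγ0 hγ1 with hFdef
  set QS : List (Ahat × Ept) → Ahat → ℝ := Qstar ρ u γ hρpos hρsum hu hγ0 hγ1 with hQSdef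
  set V : List (Ahat × Ept) → ℝ := Vstar ρ u γ hρpos hρsum hu hγ0 hγ1 with hVdef
  set πs : Policy Ahat (Option P) Ept := fun h => (F (hworld h), none) with hπs
  set ι' : Option P → Policy Ahat (Option P) Ept := fun op =>
    op.elim πs (fun p h => mapAct some
      (ι p (h.map fun pe => ((pe.1.1, pe.1.2.getD p), pe.2)))) with hι'
  have hγ1' : (0:ℝ) < 1 - γ := by linarith
  -- basic bounds
  have hQb : ∀ (h : Hist Ahat (Option P) Ept) (a : Act Ahat (Option P)),
      |Qre ι' ρ u γ h a| ≤ (1 - γ)⁻¹ := by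
    intro h a
    rw [abs_le]
    refine ⟨?_, Qre_le hρpos hρsum hu hγ0 hγ1 h a⟩
    have := Qre_nonneg (ι₀ := ι') hρpos hρsum hu hγ0 hγ1 h a
    have : (0:ℝ) ≤ (1 - γ)⁻¹ := by positivity
    linarith [Qre_nonneg (ι₀ := ι') hρpos hρsum hu hγ0 hγ1 h a]
  have hQSexp : ∀ wh (b : Ahat), QS wh b =
      ∑ e, ρ wh b e * (u (wh ++ [(b, e)]) + γ * V (wh ++ [(b, e)])) := fun _ _ => rfl
  have hQSb : ∀ wh (b : Ahat), |QS wh b| ≤ 1 + γ * Cv := by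
    intro wh b
    rw [hQSexp]
    calc |∑ e, ρ wh b e * (u (wh ++ [(b, e)]) + γ * V (wh ++ [(b, e)]))|
        ≤ ∑ e, |ρ wh b e * (u (wh ++ [(b, e)]) + γ * V (wh ++ [(b, e)]))| :=
          Finset.abs_sum_le_sum_abs _ _
      _ ≤ ∑ e, ρ wh b e * (1 + γ * Cv) := by
          apply Finset.sum_le_sum
          intro e _
          rw [abs_mul, abs_of_pos (hρpos wh b e)]
          apply mul_le_mul_of_nonneg_left _ (hρpos wh b e).le
          calc |u (wh ++ [(b, e)]) + γ * V (wh ++ [(b, e)])|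
              ≤ |u (wh ++ [(b, e)])| + |γ * V (wh ++ [(b, e)])| := abs_add_le _ _
            _ ≤ 1 + γ * Cv := by
                apply add_le_add
                · rw [abs_le]; have := hu (wh ++ [(b, e)])
                  exact ⟨by linarith [this.1], this.2⟩
                · rw [abs_mul, abs_of_pos hγ0]
                  exact mul_le_mul_of_nonneg_left (hCv _) hγ0.le
      _ = 1 + γ * Cv := by rw [← Finset.sum_mul, hρsum wh b, one_mul]
  set C : ℝ := (1 - γ)⁻¹ + (1 + γ * Cv) with hCdef
  have hC0 : 0 ≤ C := by
    have : (0:ℝ) ≤ (1 - γ)⁻¹ := by positivity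
    have : (0:ℝ) ≤ γ * Cv := mul_nonneg hγ0.le hCv0
    rw [hCdef]; positivity
  -- key contraction estimates
  have keyA : ∀ (n : ℕ) (h : Hist Ahat (Option P) Ept) (b : Ahat),
      |Qre ι' ρ u γ h (b, none) - QS (hworld h) b| ≤ γ ^ n * C := by
    intro n
    induction n with
    | zero =>
      intro h b
      rw [pow_zero, one_mul, hCdef]
      have h1 : |Qre ι' ρ u γ h (b, none) - QS (hworld h) b| ≤
          |Qre ι' ρ u γ h (b, none)| + |QS (hworld h) b| := by
        rw [sub_eq_add_neg]
        simpa [abs_neg] using abs_add_le (Qre ι' ρ u γ h (b, none)) (-(QS (hworld h) b))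
      linarith [hQb h (b, none), hQSb (hworld h) b]
    | succ n ih =>
      intro h b
      rw [Qre_rec hρpos hρsum hu hγ0 hγ1 h (b, none)]
      have hQSe := hQSexp (hworld h) b
      rw [hQSe, ← Finset.sum_sub_distrib]
      have key : ∀ e : Ept,
          |ρ (hworld h) ((b, none) : Act Ahat (Option P)).1 e *
              (u (hworld h ++ [(((b, none) : Act Ahat (Option P)).1, e)]) +
                γ * Qre ι' ρ u γ (h ++ [((b, none), e)])
                  (ι' ((b, none) : Act Ahat (Option P)).2 (h ++ [((b, none), e)]))) -
            ρ (hworld h) b e * (u (hworld h ++ [(b, e)]) + γ * V (hworld h ++ [(b, e)]))| ≤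
            ρ (hworld h) b e * (γ * (γ ^ n * C)) := by
        intro e
        have hw' : hworld (h ++ [(((b, none) : Act Ahat (Option P)), e)]) =
            hworld h ++ [(b, e)] := hworld_append h (b, none) e
        have hact : ι' ((b, none) : Act Ahat (Option P)).2 (h ++ [((b, none), e)]) =
            (F (hworld h ++ [(b, e)]), none) := by
          show (F (hworld (h ++ [((b, none), e)])), (none : Option P)) = _
          rw [hw']
        have hV' : V (hworld h ++ [(b, e)]) =
            QS (hworld h ++ [(b, e)]) (F (hworld h ++ [(b, e)])) :=
          Vstar_eq_Qstar_fg ρ u γ hρpos hρsum hu hγ0 hγ1 _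
        have ihe := ih (h ++ [((b, none), e)]) (F (hworld h ++ [(b, e)]))
        rw [hw'] at ihe
        rw [hact, hV']
        have hre : ρ (hworld h) ((b, none) : Act Ahat (Option P)).1 e *
              (u (hworld h ++ [(((b, none) : Act Ahat (Option P)).1, e)]) +
                γ * Qre ι' ρ u γ (h ++ [((b, none), e)]) (F (hworld h ++ [(b, e)]), none)) -
            ρ (hworld h) b e * (u (hworld h ++ [(b, e)]) +
                γ * QS (hworld h ++ [(b, e)]) (F (hworld h ++ [(b, e)]))) =
            ρ (hworld h) b e * (γ *
              (Qre ι' ρ u γ (h ++ [((b, none), e)]) (F (hworld h ++ [(b, e)]), none) -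
                QS (hworld h ++ [(b, e)]) (F (hworld h ++ [(b, e)])))) := by
          show ρ (hworld h) b e * (u (hworld h ++ [(b, e)]) + γ * _) - _ = _
          ring
        rw [hre, abs_mul, abs_mul, abs_of_pos (hρpos _ _ _), abs_of_pos hγ0]
        exact mul_le_mul_of_nonneg_left
          (mul_le_mul_of_nonneg_left ihe hγ0.le) (hρpos _ _ _).le
      calc |∑ e, (ρ (hworld h) ((b, none) : Act Ahat (Option P)).1 e *
              (u (hworld h ++ [(((b, none) : Act Ahat (Option P)).1, e)]) +
                γ * Qre ι' ρ u γ (h ++ [((b, none), e)])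
                  (ι' ((b, none) : Act Ahat (Option P)).2 (h ++ [((b, none), e)]))) -
            ρ (hworld h) b e * (u (hworld h ++ [(b, e)]) + γ * V (hworld h ++ [(b, e)])))|
          ≤ ∑ e, |ρ (hworld h) ((b, none) : Act Ahat (Option P)).1 e *
              (u (hworld h ++ [(((b, none) : Act Ahat (Option P)).1, e)]) +
                γ * Qre ι' ρ u γ (h ++ [((b, none), e)])
                  (ι' ((b, none) : Act Ahat (Option P)).2 (h ++ [((b, none), e)]))) -
            ρ (hworld h) b e * (u (hworld h ++ [(b, e)]) + γ * V (hworld h ++ [(b, e)]))| :=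
            Finset.abs_sum_le_sum_abs _ _
        _ ≤ ∑ e, ρ (hworld h) b e * (γ * (γ ^ n * C)) :=
            Finset.sum_le_sum fun e _ => key e
        _ = γ ^ (n + 1) * C := by
            rw [← Finset.sum_mul, hρsum (hworld h) b, one_mul]; ring
  have keyB : ∀ (n : ℕ) (h : Hist Ahat (Option P) Ept) (a : Act Ahat (Option P)),
      Qre ι' ρ u γ h a ≤ QS (hworld h) a.1 + γ ^ n * C := by
    intro n
    induction n with
    | zero =>
      intro h a
      rw [pow_zero, one_mul, hCdef]
      have h1 := hQb h a
      have h2 := hQSb (hworld h) a.1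
      rw [abs_le] at h1 h2
      linarith [h1.2, h2.1]
    | succ n ih =>
      intro h a
      rw [Qre_rec hρpos hρsum hu hγ0 hγ1 h a]
      have step : ∀ e : Ept,
          ρ (hworld h) a.1 e * (u (hworld h ++ [(a.1, e)]) +
              γ * Qre ι' ρ u γ (h ++ [(a, e)]) (ι' a.2 (h ++ [(a, e)]))) ≤
            ρ (hworld h) a.1 e * (u (hworld h ++ [(a.1, e)]) +
              γ * (V (hworld h ++ [(a.1, e)]) + γ ^ n * C)) := by
        intro e
        apply mul_le_mul_of_nonneg_left _ (hρpos _ _ _).le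
        apply add_le_add (le_refl _)
        apply mul_le_mul_of_nonneg_left _ hγ0.le
        have ihe := ih (h ++ [(a, e)]) (ι' a.2 (h ++ [(a, e)]))
        rw [hworld_append] at ihe
        calc Qre ι' ρ u γ (h ++ [(a, e)]) (ι' a.2 (h ++ [(a, e)]))
            ≤ QS (hworld h ++ [(a.1, e)]) (ι' a.2 (h ++ [(a, e)])).1 + γ ^ n * C := ihe
          _ ≤ V (hworld h ++ [(a.1, e)]) + γ ^ n * C := by
              have := Qstar_le_Vstar ρ u γ hρpos hρsum hu hγ0 hγ1
                (hworld h ++ [(a.1, e)]) (ι' a.2 (h ++ [(a, e)])).1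
              linarith
      calc ∑ e, ρ (hworld h) a.1 e * (u (hworld h ++ [(a.1, e)]) +
              γ * Qre ι' ρ u γ (h ++ [(a, e)]) (ι' a.2 (h ++ [(a, e)])))
          ≤ ∑ e, ρ (hworld h) a.1 e * (u (hworld h ++ [(a.1, e)]) +
              γ * (V (hworld h ++ [(a.1, e)]) + γ ^ n * C)) :=
            Finset.sum_le_sum fun e _ => step e
        _ = (∑ e, ρ (hworld h) a.1 e * (u (hworld h ++ [(a.1, e)]) +
              γ * V (hworld h ++ [(a.1, e)]))) +
            (∑ e, ρ (hworld h) a.1 e) * (γ * (γ ^ n * C)) := by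
            rw [Finset.sum_mul, ← Finset.sum_add_distrib]
            congr 1; ext e; ring
        _ = QS (hworld h) a.1 + γ ^ (n + 1) * C := by
            rw [hρsum (hworld h) a.1, ← hQSexp (hworld h) a.1]; ring
  -- pass to the limit
  have hlim : Filter.Tendsto (fun n : ℕ => γ ^ n * C) Filter.atTop (nhds 0) := by
    simpa using (tendsto_pow_atTop_nhds_zero_of_lt_one hγ0.le hγ1).mul_const C
  have eqA : ∀ (h : Hist Ahat (Option P) Ept) (b : Ahat),
      Qre ι' ρ u γ h (b, none) = QS (hworld h) b := by
    intro h b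
    have h0 : |Qre ι' ρ u γ h (b, none) - QS (hworld h) b| ≤ 0 :=
      ge_of_tendsto' hlim fun n => keyA n h b
    rw [abs_nonpos_iff, sub_eq_zero] at h0
    exact h0
  have leB : ∀ (h : Hist Ahat (Option P) Ept) (a : Act Ahat (Option P)),
      Qre ι' ρ u γ h a ≤ QS (hworld h) a.1 := by
    intro h a
    have hlim' : Filter.Tendsto (fun n : ℕ => QS (hworld h) a.1 + γ ^ n * C)
        Filter.atTop (nhds (QS (hworld h) a.1)) := by
      simpa using hlim.const_add (QS (hworld h) a.1)
    exact ge_of_tendsto' hlim' fun n => keyB n h a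
  -- the value of πs and the upper bound
  have hπsval : ∀ h : Hist Ahat (Option P) Ept,
      Vre ι' ρ u γ πs h = V (hworld h) := by
    intro h
    have : Vre ι' ρ u γ πs h = Qre ι' ρ u γ h (F (hworld h), none) := rfl
    rw [this, eqA h (F (hworld h))]
    exact (Vstar_eq_Qstar_fg ρ u γ hρpos hρsum hu hγ0 hγ1 _).symm
  have hub : ∀ (π : Policy Ahat (Option P) Ept) (h : Hist Ahat (Option P) Ept),
      Vre ι' ρ u γ π h ≤ V (hworld h) :=
    fun π h => (leB h (π h)).trans
      (Qstar_le_Vstar ρ u γ hρpos hρsum hu hγ0 hγ1 (hworld h) (π h).1)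
  refine ⟨Option P, Function.Embedding.some, ι', ?_, none, πs, rfl, fun h => rfl,
    ?_, ?_⟩
  · -- extension property
    intro p h
    show mapAct some (ι p ((mapHist some h).map fun pe => ((pe.1.1, pe.1.2.getD p), pe.2)))
        = mapAct some (ι p h)
    congr 1
    rw [mapHist, List.map_map]
    have hcomp : ((fun pe : Act Ahat (Option P) × Ept => ((pe.1.1, pe.1.2.getD p), pe.2)) ∘
        fun pe : Act Ahat P × Ept => (mapAct (some : P → Option P) pe.1, pe.2)) = id := by
      funext pe
      simp [mapAct]
    rw [hcomp, List.map_id]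
  · -- modification independence
    intro h h' hw
    show (F (hworld h), (none : Option P)) = (F (hworld h'), none)
    rw [hw]
  · -- optimality
    intro h
    have hbdd : BddAbove (Set.range fun π : Policy Ahat (Option P) Ept =>
        Vre ι' ρ u γ π h) := by
      refine ⟨V (hworld h), ?_⟩
      rintro x ⟨π, rfl⟩
      exact hub π h
    apply le_antisymm
    · exact le_ciSup hbdd πs
    · exact ciSup_le fun π => (hub π h).trans (hπsval h).symm.le

end Stmt10
end
end
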